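/- arXiv:2306.00336 — 2 statements merged into one kernel-verified Lean document; each statement's English description precedes it below -/
import Mathlib

section
/- Let lambda be a partition and let w_lambda in S_infty be the dominant permutation of shape lambda, i.e., the unique permutation whose Rothe diagram D(w_lambda) := {(i, w_lambda(j)) : i < j, w_lambda(i) > w_lambda(j)} equals the Young diagram D_lambda. Then R(w_lambda) is a single Coxeter–Knuth equivalence class, and the tableau T_lambda of shape lambda with entry i+j-1 in each position (i,j) of D_lambda is the unique increasing tableau of partition shape with revrow(T_lambda) in R(w_lambda). -/
open MvPolynomial

/-! ### Permutations of ℤ, reduced words -/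

/-- The simple transposition `s_i = (i, i+1)` of `ℤ`. -/
def sT (i : ℤ) : Equiv.Perm ℤ := Equiv.swap i (i + 1)

/-- The product `s_{i_1} s_{i_2} ⋯ s_{i_l}` of the simple transpositions indexed by a word. -/
def wordProd (l : List ℤ) : Equiv.Perm ℤ := (l.map sT).prod

/-- `S_ℤ`: the subgroup of permutations of `ℤ` generated by the simple transpositions. -/
def SZSet : Set (Equiv.Perm ℤ) := {w | ∃ l : List ℤ, wordProd l = w}

/-- `S_∞`: the subgroup generated by `s_i` for `i ≥ 1`. -/
def SinftySet : Set (Equiv.Perm ℤ) :=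
  {w | ∃ l : List ℤ, (∀ i ∈ l, 1 ≤ i) ∧ wordProd l = w}

/-- `S_n`: the subgroup generated by `s_i` for `1 ≤ i ≤ n-1`. -/
def SnSet (n : ℕ) : Set (Equiv.Perm ℤ) :=
  {w | ∃ l : List ℤ, (∀ i ∈ l, 1 ≤ i ∧ i < n) ∧ wordProd l = w}

/-- A reduced word for `w`: a minimal length word whose product is `w`. -/
def IsReducedWord (w : Equiv.Perm ℤ) (l : List ℤ) : Prop :=
  wordProd l = w ∧ ∀ m : List ℤ, wordProd m = w → l.length ≤ m.length

/-- The Coxeter length of `w` (the length of any reduced word for `w`). -/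
noncomputable def lenOf (w : Equiv.Perm ℤ) : ℕ :=
  sInf {m | ∃ l : List ℤ, wordProd l = w ∧ l.length = m}

/-- The inversion set `Inv(w) = {(a,b) : a < b, w(a) > w(b)}`. -/
def InvSet (w : Equiv.Perm ℤ) : Set (ℤ × ℤ) := {p | p.1 < p.2 ∧ w p.2 < w p.1}

/-- The Lehmer code `c_i(w) = #{j : i < j, w(i) > w(j)}`. -/
noncomputable def codeOf (w : Equiv.Perm ℤ) (i : ℤ) : ℕ := {j : ℤ | i < j ∧ w j < w i}.ncard

/-- The Rothe diagram `D(w) = {(i, w(j)) : i < j, w(i) > w(j)}`. -/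
def RotheD (w : Equiv.Perm ℤ) : Set (ℤ × ℤ) :=
  {p | ∃ j : ℤ, p.1 < j ∧ w j < w p.1 ∧ p.2 = w j}

/-! ### Primed letters and primed words -/

/-- A primed letter: `(x, false)` denotes the integer `x`, `(x, true)` denotes `x' = x - 1/2`. -/
abbrev PLetter := ℤ × Bool

/-- Twice the value of a primed letter (so that comparisons agree with `1' < 1 < 2' < 2 < ⋯`). -/
def pval (p : PLetter) : ℤ := 2 * p.1 - (if p.2 then 1 else 0)

/-- A strictly decreasing primed word. -/
def PDec (l : List PLetter) : Prop := l.Pairwise (fun p q => pval q < pval p)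

/-- A strictly decreasing integer word. -/
def ZDec (l : List ℤ) : Prop := l.Pairwise (fun x y => y < x)

/-- Remove the primes from a primed word (the "ceiling"). -/
def unprimeW (l : List PLetter) : List ℤ := l.map Prod.fst

/-- Membership in `R⁺(w)`: a primed word whose unprimed form is a reduced word for `w`. -/
def IsPrimedReducedWord (w : Equiv.Perm ℤ) (l : List PLetter) : Prop :=
  IsReducedWord w (unprimeW l)

/-- The set `Marked(i)` of marked inversions of a primed word. -/
def markedSet (l : List PLetter) : Set (ℤ × ℤ) :=
  {p | ∃ j : Fin l.length, (l.get j).2 = true ∧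
        p.1 = wordProd ((l.drop ((j : ℕ) + 1)).reverse.map Prod.fst) (l.get j).1 ∧
        p.2 = wordProd ((l.drop ((j : ℕ) + 1)).reverse.map Prod.fst) ((l.get j).1 + 1)}

/-! ### Factorizations (as sequences of factors) -/

/-- The concatenation of the first `N` factors of a factorization. -/
def concatP (a : ℕ → List PLetter) (N : ℕ) : List PLetter := ((List.range N).map a).flatten

/-- The concatenation of the first `N` factors of an unprimed factorization. -/
def concatZ (a : ℕ → List ℤ) (N : ℕ) : List ℤ := ((List.range N).map a).flatten

/-- `RF⁺(w, A)`: decreasing primed reduced factorizations of `w` with marked set `A`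
(all but finitely many factors empty). -/
def RFplus (w : Equiv.Perm ℤ) (A : Set (ℤ × ℤ)) : Set (ℕ → List PLetter) :=
  {a | (∀ i, PDec (a i)) ∧ ∃ N : ℕ, (∀ m, N ≤ m → a m = []) ∧
        IsPrimedReducedWord w (concatP a N) ∧ markedSet (concatP a N) = A}

/-- `RF⁺_n(w, A)`: elements of `RF⁺(w, A)` with all factors beyond the first `n` empty. -/
def RFplusN (n : ℕ) (w : Equiv.Perm ℤ) (A : Set (ℤ × ℤ)) : Set (ℕ → List PLetter) :=
  {a | (∀ i, PDec (a i)) ∧ (∀ m, n ≤ m → a m = []) ∧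
        IsPrimedReducedWord w (concatP a n) ∧ markedSet (concatP a n) = A}

/-- `RF_n(w)`: unprimed decreasing reduced factorizations of `w` into at most `n` factors. -/
def RFZn (n : ℕ) (w : Equiv.Perm ℤ) : Set (ℕ → List ℤ) :=
  {a | (∀ i, ZDec (a i)) ∧ (∀ m, n ≤ m → a m = []) ∧ IsReducedWord w (concatZ a n)}

/-- Removing the primes from each factor of a primed factorization. -/
def unprimeF (a : ℕ → List PLetter) : ℕ → List ℤ := fun m => unprimeW (a m)

/-! ### The pairing procedure and crystal operators (primed version) -/

/-- Find the first letter `b` in the (decreasing) list with `⌈b⌉ < c`, removing it. -/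
def findPairP (c : ℤ) : List PLetter → Option PLetter × List PLetter
  | [] => (none, [])
  | b :: rest =>
      if b.1 < c then (some b, rest)
      else
        let r := findPairP c rest
        (r.1, b :: r.2)

/-- Iterate the pairing over the letters of `v` from right to left. -/
def pairFoldP (u : List PLetter) (vrev : List PLetter) :
    List (PLetter × PLetter) × List PLetter :=
  vrev.foldl (fun st c =>
    match findPairP c.1 st.2 with
    | (none, r) => (st.1, r)
    | (some b, r) => ((b, c) :: st.1, r)) ([], u)

/-- The set `pair(u, v)` of paired letters, as a list of pairs. -/
def pairsP (u v : List PLetter) : List (PLetter × PLetter) := (pairFoldP u v.reverse).1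

/-- The unpaired letters of `v` (in decreasing order). -/
def unpairedSnd (u v : List PLetter) : List PLetter :=
  v.filter fun c => decide (c ∉ (pairsP u v).map Prod.snd)

/-- The unpaired letters of `u` (in decreasing order). -/
def unpairedFst (u v : List PLetter) : List PLetter :=
  u.filter fun b => decide (b ∉ (pairsP u v).map Prod.fst)

theorem exists_add_not_mem (L : List ℤ) (x : ℤ) : ∃ q : ℕ, x + q ∉ L := by
  have h : ∃ q : ℕ, ∀ y ∈ L, y < x + q := by
    induction L with
    | nil => exact ⟨1, by simp⟩
    | cons a t ih =>
      obtain ⟨q, hq⟩ := ih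
      refine ⟨q + (a - x).toNat + 1, ?_⟩
      intro y hy
      rcases List.mem_cons.mp hy with rfl | h
      · push_cast; omega
      · have := hq y h; push_cast; omega
  obtain ⟨q, hq⟩ := h
  exact ⟨q, fun hmem => lt_irrefl _ (hq _ hmem)⟩

theorem exists_sub_not_mem (L : List ℤ) (x : ℤ) : ∃ q : ℕ, x - q ∉ L := by
  have h : ∃ q : ℕ, ∀ y ∈ L, x - q < y := by
    induction L with
    | nil => exact ⟨1, by simp⟩
    | cons a t ih =>
      obtain ⟨q, hq⟩ := ih
      refine ⟨q + (x - a).toNat + 1, ?_⟩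
      intro y hy
      rcases List.mem_cons.mp hy with rfl | h
      · push_cast; omega
      · have := hq y h; push_cast; omega
  obtain ⟨q, hq⟩ := h
  exact ⟨q, fun hmem => lt_irrefl _ (hq _ hmem)⟩

/-- The minimal `q ∈ ℕ` with `x + q ∉ L`. -/
def qUp (L : List ℤ) (x : ℤ) : ℕ := Nat.find (exists_add_not_mem L x)

/-- The minimal `q ∈ ℕ` with `x - q ∉ L`. -/
def qDown (L : List ℤ) (x : ℤ) : ℕ := Nat.find (exists_sub_not_mem L x)

/-- Reverse the prime on a primed letter. -/
def toggleP (p : PLetter) : PLetter := (p.1, !p.2)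

/-- Toggle the prime on the occurrence of the letter `p` in a primed word. -/
def toggleIn (l : List PLetter) (p : PLetter) : List PLetter :=
  l.map fun q => if q = p then toggleP q else q

/-- Swap the primes on a pair `(b, c)` with `b` in the first word and `c` in the second:
reverse both primes when exactly one of the two letters is primed. -/
def swapPairIn (uv : List PLetter × List PLetter) (bc : PLetter × PLetter) :
    List PLetter × List PLetter :=
  if bc.1.2 = bc.2.2 then uv else (toggleIn uv.1 bc.1, toggleIn uv.2 bc.2)

/-- Insert a letter into a decreasing primed word at the correct position. -/
def insertDecP (p : PLetter) : List PLetter → List PLetter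
  | [] => [p]
  | q :: t => if pval q < pval p then p :: q :: t else q :: insertDecP p t

/-- The raising crystal operator acting on a consecutive pair of factors (primed version). -/
def eStepP (u v : List PLetter) : Option (List PLetter × List PLetter) :=
  match unpairedSnd u v with
  | [] => none
  | x :: _ =>
    let q : ℕ := qUp (unprimeW u) x.1
    let toSwap := (pairsP u v).filter fun bc => decide (x.1 < bc.2.1 ∧ bc.2.1 ≤ x.1 + q)
    some (toSwap.foldl swapPairIn (insertDecP (x.1 + q, x.2) u, v.erase x))

/-- The lowering crystal operator acting on a consecutive pair of factors (primed version). -/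
def fStepP (u v : List PLetter) : Option (List PLetter × List PLetter) :=
  match (unpairedFst u v).getLast? with
  | none => none
  | some y =>
    let q : ℕ := qDown (unprimeW v) y.1
    let toSwap := (pairsP u v).filter fun bc => decide (y.1 - q ≤ bc.1.1 ∧ bc.1.1 < y.1)
    some (toSwap.foldl swapPairIn (u.erase y, insertDecP (y.1 - q, y.2) v))

/-- Apply a two-factor operator at position `(i, i+1)` of a factorization. -/
def applyAtP (g : List PLetter → List PLetter → Option (List PLetter × List PLetter))
    (i : ℕ) (a : ℕ → List PLetter) : Option (ℕ → List PLetter) :=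
  (g (a i) (a (i + 1))).map fun uv =>
    Function.update (Function.update a i uv.1) (i + 1) uv.2

/-- The crystal operator `e` on primed factorizations acting on factors `i, i+1` (0-indexed). -/
def eP (i : ℕ) (a : ℕ → List PLetter) : Option (ℕ → List PLetter) := applyAtP eStepP i a

/-- The crystal operator `f` on primed factorizations acting on factors `i, i+1` (0-indexed). -/
def fP (i : ℕ) (a : ℕ → List PLetter) : Option (ℕ → List PLetter) := applyAtP fStepP i a

/-! ### Crystal operators (unprimed version) -/

def findPairZ (c : ℤ) : List ℤ → Option ℤ × List ℤ
  | [] => (none, [])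
  | b :: rest =>
      if b < c then (some b, rest)
      else
        let r := findPairZ c rest
        (r.1, b :: r.2)

def pairFoldZ (u : List ℤ) (vrev : List ℤ) : List (ℤ × ℤ) × List ℤ :=
  vrev.foldl (fun st c =>
    match findPairZ c st.2 with
    | (none, r) => (st.1, r)
    | (some b, r) => ((b, c) :: st.1, r)) ([], u)

/-- The set `pair(u, v)` for integer words. -/
def pairsZ (u v : List ℤ) : List (ℤ × ℤ) := (pairFoldZ u v.reverse).1

def insertDecZ (x : ℤ) : List ℤ → List ℤ
  | [] => [x]
  | q :: t => if q < x then x :: q :: t else q :: insertDecZ x t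

/-- The raising crystal operator on a consecutive pair of integer factors. -/
def eStepZ (u v : List ℤ) : Option (List ℤ × List ℤ) :=
  match v.filter (fun c => decide (c ∉ (pairsZ u v).map Prod.snd)) with
  | [] => none
  | x :: _ =>
    let q : ℕ := qUp u x
    some (insertDecZ (x + q) u, v.erase x)

/-- The lowering crystal operator on a consecutive pair of integer factors. -/
def fStepZ (u v : List ℤ) : Option (List ℤ × List ℤ) :=
  match (u.filter (fun b => decide (b ∉ (pairsZ u v).map Prod.fst))).getLast? with
  | none => none
  | some y =>
    let q : ℕ := qDown v y
    some (u.erase y, insertDecZ (y - q) v)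

def applyAtZ (g : List ℤ → List ℤ → Option (List ℤ × List ℤ))
    (i : ℕ) (a : ℕ → List ℤ) : Option (ℕ → List ℤ) :=
  (g (a i) (a (i + 1))).map fun uv =>
    Function.update (Function.update a i uv.1) (i + 1) uv.2

/-- The crystal operator `e` acting on factors `i, i+1` (0-indexed) of an integer factorization,
so that `eZ i` is the paper's `e_{i+1}`. -/
def eZ (i : ℕ) (a : ℕ → List ℤ) : Option (ℕ → List ℤ) := applyAtZ eStepZ i a

/-- The crystal operator `f` acting on factors `i, i+1` (0-indexed). -/
def fZ (i : ℕ) (a : ℕ → List ℤ) : Option (ℕ → List ℤ) := applyAtZ fStepZ i a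

/-! ### Coxeter–Knuth equivalence and tableaux -/

/-- One elementary Coxeter–Knuth move. -/
inductive CKStep : List ℤ → List ℤ → Prop
  | acb (u v : List ℤ) {a b c : ℤ} (h1 : a < b) (h2 : b < c) :
      CKStep (u ++ a :: c :: b :: v) (u ++ c :: a :: b :: v)
  | bca (u v : List ℤ) {a b c : ℤ} (h1 : a < b) (h2 : b < c) :
      CKStep (u ++ b :: c :: a :: v) (u ++ b :: a :: c :: v)
  | braid (u v : List ℤ) {a b : ℤ} (h : b = a + 1 ∨ b = a - 1) :
      CKStep (u ++ a :: b :: a :: v) (u ++ b :: a :: b :: v)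

/-- Coxeter–Knuth equivalence. -/
def CKEquiv : List ℤ → List ℤ → Prop := Relation.EqvGen CKStep

/-- A tableau is recorded as its list of rows; its shape is the list of row lengths. -/
def shapeOf (T : List (List ℤ)) : List ℕ := T.map List.length

/-- The row reading word: rows left to right, starting with the last row. -/
def rowword (T : List (List ℤ)) : List ℤ := T.reverse.flatten

/-- The reverse row reading word. -/
def revrow (T : List (List ℤ)) : List ℤ := (rowword T).reverse

/-- The entry of `T` in row `i`, position `j` within the row (both 0-indexed). -/
def entryOf (T : List (List ℤ)) (i j : ℕ) : ℤ := (T.getD i []).getD j 0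

/-- `T` has partition shape: rows nonempty with weakly decreasing lengths. -/
def IsPartShape (T : List (List ℤ)) : Prop :=
  (∀ r ∈ T, r ≠ []) ∧ ∀ i, i + 1 < T.length → (T.getD (i + 1) []).length ≤ (T.getD i []).length

/-- An increasing tableau of partition shape. -/
def IncrTab (T : List (List ℤ)) : Prop :=
  IsPartShape T ∧ (∀ r ∈ T, r.Pairwise (· < ·)) ∧
  ∀ i j, i + 1 < T.length → j < (T.getD (i + 1) []).length → entryOf T i j < entryOf T (i + 1) j

/-- A decreasing tableau of partition shape. -/
def DecrTab (T : List (List ℤ)) : Prop :=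
  IsPartShape T ∧ (∀ r ∈ T, r.Pairwise (fun x y => y < x)) ∧
  ∀ i j, i + 1 < T.length → j < (T.getD (i + 1) []).length → entryOf T (i + 1) j < entryOf T i j

/-! ### Shifted tableaux -/

/-- Strict partition shape: rows nonempty with strictly decreasing lengths.  Row `i`
(0-indexed) of a shifted tableau occupies columns `i, i+1, …`. -/
def IsStrictShape (T : List (List ℤ)) : Prop :=
  (∀ r ∈ T, r ≠ []) ∧ ∀ i, i + 1 < T.length → (T.getD (i + 1) []).length < (T.getD i []).length

/-- An increasing shifted tableau: rows and columns strictly increase.  In row-list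
coordinates, the entry of row `i+1` in within-row position `j` lies in the same column as the
entry of row `i` in within-row position `j+1`. -/
def ShIncrTab (T : List (List ℤ)) : Prop :=
  IsStrictShape T ∧ (∀ r ∈ T, r.Pairwise (· < ·)) ∧
  ∀ i j, i + 1 < T.length → j < (T.getD (i + 1) []).length →
    entryOf T i (j + 1) < entryOf T (i + 1) j

/-- A decreasing shifted tableau. -/
def ShDecrTab (T : List (List ℤ)) : Prop :=
  IsStrictShape T ∧ (∀ r ∈ T, r.Pairwise (fun x y => y < x)) ∧
  ∀ i j, i + 1 < T.length → j < (T.getD (i + 1) []).length →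
    entryOf T (i + 1) j < entryOf T i (j + 1)

/-! ### Young diagrams of partitions given as lists -/

/-- The Young diagram of a partition given as a list of row lengths (1-indexed positions). -/
def YDiagL (lam : List ℕ) : Set (ℤ × ℤ) :=
  {p | 1 ≤ p.1 ∧ 1 ≤ p.2 ∧ p.2 ≤ (lam.getD (p.1 - 1).toNat 0 : ℤ)}

/-- The tableau `T_λ` with entry `i + j - 1` in each box `(i, j)` of `D_λ` (1-indexed). -/
def Tlam (lam : List ℕ) : List (List ℤ) :=
  lam.mapIdx fun i k => (List.range k).map fun j => ((i + j + 1 : ℕ) : ℤ)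

/-! ### Fixed-point-free involutions -/

def fpfFun (i : ℤ) : ℤ := if Even i then i - 1 else i + 1

theorem fpfFun_involutive : Function.Involutive fpfFun := by
  intro i
  simp only [fpfFun, Int.even_iff]
  split <;> split <;> omega

/-- The fixed-point-free involution `1_fpf : i ↦ i - (-1)^i`. -/
def onefpf : Equiv.Perm ℤ :=
  ⟨fpfFun, fpfFun, fpfFun_involutive, fpfFun_involutive⟩

/-- `I^fpf_ℤ`: the `S_ℤ`-conjugation orbit of `1_fpf`. -/
def IfpfZ : Set (Equiv.Perm ℤ) := {z | ∃ w ∈ SZSet, z = w⁻¹ * onefpf * w}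

/-- `I^fpf_∞`: the `S_∞`-conjugation orbit of `1_fpf`. -/
def IfpfInfty : Set (Equiv.Perm ℤ) := {z | ∃ w ∈ SinftySet, z = w⁻¹ * onefpf * w}

/-- `𝒜^Sp(z)`: minimal-length `w ∈ S_ℤ` with `z = w⁻¹ 1_fpf w`. -/
def ASp (z : Equiv.Perm ℤ) : Set (Equiv.Perm ℤ) :=
  {w | w ∈ SZSet ∧ z = w⁻¹ * onefpf * w ∧
       ∀ v ∈ SZSet, z = v⁻¹ * onefpf * v → lenOf w ≤ lenOf v}

/-- `R^Sp(z)`: the set of fpf-involution words for `z`. -/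
def RSp (z : Equiv.Perm ℤ) : Set (List ℤ) := {l | ∃ w ∈ ASp z, IsReducedWord w l}

/-- The fpf-involution code `c^Sp_i(z)`. -/
noncomputable def cSp (z : Equiv.Perm ℤ) (i : ℤ) : ℕ :=
  {j : ℤ | i < j ∧ z j < min i (z i)}.ncard

/-- `RF^Sp_n(z)`: symplectic reduced factorizations into at most `n` decreasing factors. -/
def RFSp (n : ℕ) (z : Equiv.Perm ℤ) : Set (ℕ → List ℤ) :=
  {a | (∀ i, ZDec (a i)) ∧ (∀ m, n ≤ m → a m = []) ∧ concatZ a n ∈ RSp z}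

/-- `BRF^Sp_n(z)`: the bounded (by the standard flag) symplectic reduced factorizations:
every letter `m` of the factor in (0-indexed) position `i` satisfies `m ≥ i + 1`. -/
def BRFSp (n : ℕ) (z : Equiv.Perm ℤ) : Set (ℕ → List ℤ) :=
  {a | a ∈ RFSp n z ∧ ∀ m, ∀ x ∈ a m, (m : ℤ) + 1 ≤ x}

/-! ### Symplectic Coxeter–Knuth equivalence -/

/-- The extra symplectic relations, affecting the first two letters. -/
inductive SpExtra : List ℤ → List ℤ → Prop
  | down (a : ℤ) (t : List ℤ) : SpExtra (a :: (a - 1) :: t) (a :: (a + 1) :: t)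
  | comm (a b : ℤ) (t : List ℤ) (h : a % 2 = b % 2) : SpExtra (a :: b :: t) (b :: a :: t)

/-- Symplectic Coxeter–Knuth equivalence. -/
def SpCKEquiv : List ℤ → List ℤ → Prop :=
  Relation.EqvGen (fun x y => CKStep x y ∨ SpExtra x y)

/-- `half_<(λ)` for a partition given as a list: positive values among `λ_i - i`. -/
def halfLtL (lam : List ℕ) : List ℕ :=
  ((List.range lam.length).map fun k => ((lam.getD k 0 : ℤ) - (k + 1)).toNat).filter
    fun m => decide (0 < m)

/-- The shifted tableau `T^Sp_λ` of shape `half_<(λ)` with entry `i + j` in box `(i,j) ∈ SD_μ`. -/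
def TSpTab (lam : List ℕ) : List (List ℤ) :=
  (halfLtL lam).mapIdx fun k m => (List.range m).map fun t => ((2 * (k + 1) + t : ℕ) : ℤ)

/-- Symmetric partition (list version): the diagram is invariant under transposition. -/
def SymmPartL (lam : List ℕ) : Prop :=
  ∀ p : ℤ × ℤ, p ∈ YDiagL lam ↔ (p.2, p.1) ∈ YDiagL lam

/-- Skew-symmetric partition (list version). -/
def SkewSymmPartL (lam : List ℕ) : Prop :=
  SymmPartL lam ∧ ∀ i : ℤ, (i, i) ∈ YDiagL lam → (i + 1, i + 1) ∉ YDiagL lam →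
    (¬ ∃ mu : List ℕ, mu.Pairwise (· ≥ ·) ∧ YDiagL mu = YDiagL lam ∪ {(i, i + 1)} ∧
        YDiagL mu ≠ YDiagL lam) ∧
    (¬ ∃ mu : List ℕ, mu.Pairwise (· ≥ ·) ∧ YDiagL mu = YDiagL lam \ {(i, i + 1)} ∧
        YDiagL mu ≠ YDiagL lam)

/-! ### Demazure product, orthogonal involution words -/

/-- One step of the Demazure product: multiply by `s_i` on the left if this increases length. -/
noncomputable def demStep (i : ℤ) (x : Equiv.Perm ℤ) : Equiv.Perm ℤ :=
  if lenOf x < lenOf (sT i * x) then sT i * x else x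

/-- The Demazure product of the letters of a word. -/
noncomputable def demWordProd (l : List ℤ) : Equiv.Perm ℤ := l.foldr demStep 1

/-- `𝒜^O(z)`: minimal-length `w` with `z = w⁻¹ ∘ w` (Demazure product). -/
def AO (z : Equiv.Perm ℤ) : Set (Equiv.Perm ℤ) :=
  {w | (∃ l : List ℤ, IsReducedWord w l ∧ demWordProd (l.reverse ++ l) = z) ∧
       ∀ v : Equiv.Perm ℤ, (∃ l : List ℤ, IsReducedWord v l ∧ demWordProd (l.reverse ++ l) = z) →
         lenOf w ≤ lenOf v}

/-- `Cyc(z) = {(a, b) : a < b = z(a)}`. -/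
def CycSet (z : Equiv.Perm ℤ) : Set (ℤ × ℤ) := {p | p.1 < p.2 ∧ z p.1 = p.2}

/-- `R^O(z)`: the set of primed involution words for `z`. -/
def RO (z : Equiv.Perm ℤ) : Set (List PLetter) :=
  {l | ∃ A ⊆ CycSet z, ∃ w ∈ AO z, IsPrimedReducedWord w l ∧ markedSet l = A}

/-- The involution code `c^O_i(z)`. -/
noncomputable def cO (z : Equiv.Perm ℤ) (i : ℤ) : ℕ :=
  {j : ℤ | i < j ∧ z j ≤ min i (z i)}.ncard

/-- `RF^O_n(z)`: orthogonal (primed) reduced factorizations into at most `n` factors. -/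
def RFO (n : ℕ) (z : Equiv.Perm ℤ) : Set (ℕ → List PLetter) :=
  {a | (∀ i, PDec (a i)) ∧ (∀ m, n ≤ m → a m = []) ∧ concatP a n ∈ RO z}

/-- The unprimed image `uRF^O_n(z)` of `RF^O_n(z)`. -/
def uRFO (n : ℕ) (z : Equiv.Perm ℤ) : Set (ℕ → List ℤ) := unprimeF '' RFO n z

/-! ### Primed and orthogonal Coxeter–Knuth equivalence -/

/-- One elementary primed Coxeter–Knuth move. -/
inductive PCKStep : List PLetter → List PLetter → Prop
  | swapACB (u v : List PLetter) {A B C : PLetter} (h1 : A.1 < B.1) (h2 : B.1 < C.1) :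
      PCKStep (u ++ A :: C :: B :: v) (u ++ C :: A :: B :: v)
  | swapBCA (u v : List PLetter) {A B C : PLetter} (h1 : A.1 < B.1) (h2 : B.1 < C.1) :
      PCKStep (u ++ B :: C :: A :: v) (u ++ B :: A :: C :: v)
  | braid00 (u v : List PLetter) {a b : ℤ} (h : b = a + 1 ∨ b = a - 1) :
      PCKStep (u ++ (a, false) :: (b, false) :: (a, false) :: v)
              (u ++ (b, false) :: (a, false) :: (b, false) :: v)
  | braid11 (u v : List PLetter) {a b : ℤ} (h : b = a + 1 ∨ b = a - 1) :
      PCKStep (u ++ (a, true) :: (b, true) :: (a, true) :: v)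
              (u ++ (b, true) :: (a, true) :: (b, true) :: v)
  | mixA (u v : List PLetter) {a b : ℤ} (h : b = a + 1 ∨ b = a - 1) :
      PCKStep (u ++ (a, true) :: (b, false) :: (a, false) :: v)
              (u ++ (b, false) :: (a, false) :: (b, true) :: v)
  | mixB (u v : List PLetter) {a b : ℤ} (h : b = a + 1 ∨ b = a - 1) :
      PCKStep (u ++ (a, false) :: (b, true) :: (a, false) :: v)
              (u ++ (b, false) :: (a, true) :: (b, false) :: v)
  | mixC (u v : List PLetter) {a b : ℤ} (h : b = a + 1 ∨ b = a - 1) :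
      PCKStep (u ++ (a, true) :: (b, true) :: (a, false) :: v)
              (u ++ (b, false) :: (a, true) :: (b, true) :: v)
  | mixD (u v : List PLetter) {a b : ℤ} (h : b = a + 1 ∨ b = a - 1) :
      PCKStep (u ++ (a, true) :: (b, false) :: (a, true) :: v)
              (u ++ (b, true) :: (a, false) :: (b, true) :: v)

/-- The extra orthogonal relations, affecting the first letters of words. -/
inductive OExtra : List PLetter → List PLetter → Prop
  | prime (a : ℤ) (w : List PLetter) : OExtra ((a, false) :: w) ((a, true) :: w)
  | comm00 (a b : ℤ) (w : List PLetter) :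
      OExtra ((a, false) :: (b, false) :: w) ((b, false) :: (a, false) :: w)
  | comm01 (a b : ℤ) (w : List PLetter) :
      OExtra ((a, false) :: (b, true) :: w) ((b, false) :: (a, true) :: w)
  | comm10 (a b : ℤ) (w : List PLetter) :
      OExtra ((a, true) :: (b, false) :: w) ((b, true) :: (a, false) :: w)
  | comm11 (a b : ℤ) (w : List PLetter) :
      OExtra ((a, true) :: (b, true) :: w) ((b, true) :: (a, true) :: w)

/-- Orthogonal Coxeter–Knuth equivalence. -/
def OCKEquiv : List PLetter → List PLetter → Prop :=
  Relation.EqvGen (fun x y => PCKStep x y ∨ OExtra x y)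

/-- Increasing shifted tableau with primed entries: removing the primes yields an increasing
shifted tableau. -/
def ShIncrTabP (T : List (List PLetter)) : Prop := ShIncrTab (T.map unprimeW)

/-- Decreasing shifted tableau with primed entries. -/
def ShDecrTabP (T : List (List PLetter)) : Prop := ShDecrTab (T.map unprimeW)

/-- No primed entries on the main diagonal (the first entry of each row). -/
def DiagUnprimed (T : List (List PLetter)) : Prop :=
  ∀ r ∈ T, ∀ p : PLetter, r.head? = some p → p.2 = false

/-- The row reading word of a primed shifted tableau. -/
def rowwordP (T : List (List PLetter)) : List PLetter := T.reverse.flatten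

/-- The shape of a primed tableau. -/
def shapeOfP (T : List (List PLetter)) : List ℕ := T.map List.length

/-! ### Iterated partial operators -/

def iterOpt {α : Type*} (g : α → Option α) : ℕ → α → Option α
  | 0, a => some a
  | m + 1, a => (g a).bind (iterOpt g m)

/-! ### Weak compositions as functions `ℤ → ℕ` supported on positive integers -/

/-- A weak composition: nonnegative entries indexed by positive integers, finitely supported. -/
def WeakCompF (α : ℤ → ℕ) : Prop :=
  (∀ i ≤ 0, α i = 0) ∧ ∃ N : ℤ, ∀ i, N ≤ i → α i = 0

/-- A partition: a weakly decreasing weak composition. -/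
def IsPartitionFun (lam : ℤ → ℕ) : Prop :=
  WeakCompF lam ∧ ∀ i : ℤ, 1 ≤ i → lam (i + 1) ≤ lam i

/-- `lam` is the decreasing rearrangement `λ(α)` of `α`:
it is a partition with the same part multiplicities. -/
def IsDecRearr (α lam : ℤ → ℕ) : Prop :=
  IsPartitionFun lam ∧ ∀ k : ℕ, 0 < k →
    {i : ℤ | 1 ≤ i ∧ k ≤ α i}.ncard = {i : ℤ | 1 ≤ i ∧ k ≤ lam i}.ncard

/-- The Young diagram of a partition function (1-indexed positions). -/
def YDiag (lam : ℤ → ℕ) : Set (ℤ × ℤ) :=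
  {p | 1 ≤ p.1 ∧ 1 ≤ p.2 ∧ p.2 ≤ (lam p.1 : ℤ)}

/-- Symmetric partition: diagram invariant under transposition. -/
def SymmPartF (lam : ℤ → ℕ) : Prop :=
  IsPartitionFun lam ∧ ∀ p : ℤ × ℤ, p ∈ YDiag lam ↔ (p.2, p.1) ∈ YDiag lam

/-- Skew-symmetric partition. -/
def SkewSymmPartF (lam : ℤ → ℕ) : Prop :=
  SymmPartF lam ∧ ∀ i : ℤ, (i, i) ∈ YDiag lam → (i + 1, i + 1) ∉ YDiag lam →
    (¬ ∃ mu : ℤ → ℕ, IsPartitionFun mu ∧ YDiag mu = YDiag lam ∪ {(i, i + 1)} ∧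
        YDiag mu ≠ YDiag lam) ∧
    (¬ ∃ mu : ℤ → ℕ, IsPartitionFun mu ∧ YDiag mu = YDiag lam \ {(i, i + 1)} ∧
        YDiag mu ≠ YDiag lam)

/-- The Demazure action of a simple transposition on weak compositions:
sort the entries in positions `i, i+1` into weakly increasing order. -/
def sComp (i : ℤ) (β : ℤ → ℕ) : ℤ → ℕ :=
  if β (i + 1) < β i then
    (fun j => if j = i then β (i + 1) else if j = i + 1 then β i else β j)
  else β

/-- The Demazure action of a word on a weak composition (rightmost letter acts first). -/
def demCompAct (l : List ℤ) (β : ℤ → ℕ) : ℤ → ℕ := l.foldr sComp β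

/-- `u = u(α)`: the minimal-length permutation with `α = u ∘ λ(α)` under the Demazure action. -/
def IsUofAlpha (α lam : ℤ → ℕ) (u : Equiv.Perm ℤ) : Prop :=
  u ∈ SinftySet ∧ (∃ l : List ℤ, IsReducedWord u l ∧ demCompAct l lam = α) ∧
  ∀ v ∈ SinftySet, (∃ l : List ℤ, IsReducedWord v l ∧ demCompAct l lam = α) → lenOf u ≤ lenOf v

/-! ### Isobaric divided differences, Schubert polynomials -/

/-- `g = π_i f`, i.e. `(x_i - x_{i+1}) g = x_i f - x_{i+1} (s_i f)`. -/
def IsPiApply (i : ℤ) (f g : MvPolynomial ℤ ℤ) : Prop :=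
  (X i - X (i + 1)) * g = X i * f - X (i + 1) * MvPolynomial.rename (sT i) f

/-- `g = π_{i_1} π_{i_2} ⋯ π_{i_k} f` for the word `l = [i_1, …, i_k]`. -/
inductive IsPiWord : List ℤ → MvPolynomial ℤ ℤ → MvPolynomial ℤ ℤ → Prop
  | nil (f : MvPolynomial ℤ ℤ) : IsPiWord [] f f
  | cons (i : ℤ) (t : List ℤ) (f h g : MvPolynomial ℤ ℤ) :
      IsPiWord t f h → IsPiApply i h g → IsPiWord (i :: t) f g

/-- The dominant monomial `x^λ = ∏_{k=1}^{M} x_k^{λ_k}`. -/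
noncomputable def xpow (lam : ℤ → ℕ) (M : ℕ) : MvPolynomial ℤ ℤ :=
  ∏ k ∈ Finset.range M, (X ((k : ℤ) + 1) : MvPolynomial ℤ ℤ) ^ lam ((k : ℤ) + 1)

/-- The defining axioms of the family of Schubert polynomials `{𝔖_w}_{w ∈ S_∞}`:
`𝔖_w = x^λ` for `w` dominant of shape `λ`, and
`∂_i 𝔖_w = 𝔖_{w s_i}` whenever `w(i) > w(i+1)` (cleared of denominators). -/
def IsSchubertFamily (Sf : Equiv.Perm ℤ → MvPolynomial ℤ ℤ) : Prop :=
  (∀ w ∈ SinftySet, ∀ lam : ℤ → ℕ, IsPartitionFun lam → RotheD w = YDiag lam →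
     ∀ M : ℕ, (∀ i : ℤ, (M : ℤ) < i → lam i = 0) → Sf w = xpow lam M) ∧
  (∀ w ∈ SinftySet, ∀ i : ℤ, 1 ≤ i → w (i + 1) < w i →
     (X i - X (i + 1)) * Sf (w * sT i) = Sf w - MvPolynomial.rename (sT i) (Sf w))

/-- Substituting `x_m = 0` for all `m > n` in a polynomial. -/
noncomputable def restrictVars (n : ℕ) (g : MvPolynomial ℤ ℤ) : MvPolynomial ℤ ℤ :=
  (MvPolynomial.aeval fun m : ℤ => if m ≤ (n : ℤ) then (X m : MvPolynomial ℤ ℤ) else 0) g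

/-! ### Queer crystal operators `ē_1`, `f̄_1`, `σ_i` on symplectic factorizations -/

/-- Insert a letter directly after the first letter of a list. -/
def insertAfterFirst (c : ℤ) : List ℤ → List ℤ
  | [] => [c]
  | x :: t => x :: c :: t

/-- The operator `ē_1` on symplectic reduced factorizations. -/
def e1barOp (a : ℕ → List ℤ) : Option (ℕ → List ℤ) :=
  match a 1 with
  | [] => none
  | y :: s =>
    if ∀ x ∈ a 0, x < y then
      if Even y then
        some (Function.update (Function.update a 1 s) 0 (y :: a 0))
      else
        some (Function.update (Function.update a 1 s) 0 (insertAfterFirst (y - 2) (a 0)))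
    else none

/-- The operator `f̄_1` on symplectic reduced factorizations. -/
def f1barOp (a : ℕ → List ℤ) : Option (ℕ → List ℤ) :=
  match a 0 with
  | [] => none
  | x :: _ =>
    if ∀ y ∈ a 1, y < x then
      if (x - 1) ∈ a 0 then
        some (Function.update (Function.update a 0 ((a 0).erase (x - 1))) 1 ((x + 1) :: a 1))
      else
        some (Function.update (Function.update a 0 ((a 0).erase x)) 1 (x :: a 1))
    else none

/-- The string-reversing operator `σ` acting on factors `i, i+1` (0-indexed):
apply `f^k` where `k = wt_i - wt_{i+1}` if `k ≥ 0`, and `e^{-k}` otherwise. -/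
def sigZ (i : ℕ) (a : ℕ → List ℤ) : Option (ℕ → List ℤ) :=
  if (a (i + 1)).length ≤ (a i).length then
    iterOpt (fZ i) ((a i).length - (a (i + 1)).length) a
  else
    iterOpt (eZ i) ((a (i + 1)).length - (a i).length) a

/-- The operators `ē_{j+1}` (0-indexed `j`), defined by
`ē_i = σ_{i-1} σ_i ē_{i-1} σ_i σ_{i-1}`. -/
def ebarOp : ℕ → (ℕ → List ℤ) → Option (ℕ → List ℤ)
  | 0 => e1barOp
  | j + 1 => fun a =>
      (sigZ j a).bind fun b => (sigZ (j + 1) b).bind fun c =>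
        (ebarOp j c).bind fun d => (sigZ (j + 1) d).bind (sigZ j)

/-- The operators `f̄_{j+1}` (0-indexed `j`). -/
def fbarOp : ℕ → (ℕ → List ℤ) → Option (ℕ → List ℤ)
  | 0 => f1barOp
  | j + 1 => fun a =>
      (sigZ j a).bind fun b => (sigZ (j + 1) b).bind fun c =>
        (fbarOp j c).bind fun d => (sigZ (j + 1) d).bind (sigZ j)

/-! ### Crystal Demazure operators on symplectic factorizations -/

/-- The crystal Demazure operator `𝔇_i` (paper-indexed `i ∈ [n-1]`) inside the ambient
crystal `RF^Sp_n(z)`:  all `b` with `e_i^m(b) ∈ X` for some `m ∈ ℕ`. -/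
def DOpSp (n : ℕ) (z : Equiv.Perm ℤ) (i : ℤ) (Xs : Set (ℕ → List ℤ)) : Set (ℕ → List ℤ) :=
  {b | b ∈ RFSp n z ∧ ∃ m : ℕ, ∃ b', iterOpt (eZ (i - 1).toNat) m b = some b' ∧ b' ∈ Xs}

/-- `𝔇_{i_1} 𝔇_{i_2} ⋯ 𝔇_{i_k} X` for the word `l = [i_1, …, i_k]`. -/
def DemFoldSp (n : ℕ) (z : Equiv.Perm ℤ) (l : List ℤ) (Xs : Set (ℕ → List ℤ)) :
    Set (ℕ → List ℤ) :=
  l.foldr (fun i Y => DOpSp n z i Y) Xs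
theorem Equiv.Perm.apply_inv_self {α : Type*} (f : Equiv.Perm α) (x : α) : f (f⁻¹ x) = x :=
  f.apply_symm_apply x

theorem Equiv.Perm.inv_apply_self {α : Type*} (f : Equiv.Perm α) (x : α) : f⁻¹ (f x) = x :=
  f.symm_apply_apply x

/-! ### Auxiliary development for Statement 6 -/

namespace DomCK

lemma sT_apply (i x : ℤ) : sT i x = if x = i then i + 1 else if x = i + 1 then i else x := by
  rcases eq_or_ne x i with rfl | h1
  · simp [sT]
  · rcases eq_or_ne x (i + 1) with rfl | h2
    · simpa [sT] using Equiv.swap_apply_right i (i+1)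
    · simp [sT, Equiv.swap_apply_of_ne_of_ne h1 h2, h1, h2]

lemma wordProd_nil : wordProd ([] : List ℤ) = 1 := rfl

lemma wordProd_cons (x : ℤ) (l : List ℤ) : wordProd (x :: l) = sT x * wordProd l := by
  simp [wordProd]

lemma wordProd_append (a b : List ℤ) : wordProd (a ++ b) = wordProd a * wordProd b := by
  simp [wordProd]

lemma sT_inv (i : ℤ) : (sT i)⁻¹ = sT i := Equiv.swap_inv i (i+1)

lemma sT_mul_self (i : ℤ) : sT i * sT i = 1 := Equiv.swap_mul_self i (i+1)

lemma wordProd_reverse (l : List ℤ) : wordProd l.reverse = (wordProd l)⁻¹ := by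
  induction l with
  | nil => simp [wordProd]
  | cons x t ih =>
      rw [List.reverse_cons, wordProd_append, wordProd_cons, ih]
      simp [wordProd, sT_inv, mul_inv_rev]

lemma sT_fix {i x : ℤ} (h1 : x ≠ i) (h2 : x ≠ i + 1) : sT i x = x :=
  Equiv.swap_apply_of_ne_of_ne h1 h2

lemma wordProd_fix_low {l : List ℤ} {t : ℤ} (h : ∀ i ∈ l, t + 1 ≤ i) :
    ∀ x ≤ t, wordProd l x = x := by
  induction l with
  | nil => intro x _; simp [wordProd]
  | cons a t' ih =>
      intro x hx
      have ha := h a (by simp)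
      rw [wordProd_cons, Equiv.Perm.mul_apply,
        ih (fun i hi => h i (by simp [hi])) x hx]
      exact sT_fix (by omega) (by omega)

lemma wordProd_fix_high {l : List ℤ} {M : ℤ} (h : ∀ i ∈ l, i ≤ M) :
    ∀ x, M + 2 ≤ x → wordProd l x = x := by
  induction l with
  | nil => intro x _; simp [wordProd]
  | cons a t' ih =>
      intro x hx
      have ha := h a (by simp)
      rw [wordProd_cons, Equiv.Perm.mul_apply,
        ih (fun i hi => h i (by simp [hi])) x hx]
      exact sT_fix (by omega) (by omega)

lemma exists_bounds (l : List ℤ) : ∃ t M : ℤ, ∀ x : ℤ, (x ≤ t ∨ M ≤ x) → wordProd l x = x := by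
  induction l with
  | nil => exact ⟨0, 0, by intro x _; simp [wordProd]⟩
  | cons a t' ih =>
      obtain ⟨t, M, h⟩ := ih
      refine ⟨min t (a - 1), max M (a + 2), ?_⟩
      intro x hx
      rw [wordProd_cons, Equiv.Perm.mul_apply, h x (by omega)]
      exact sT_fix (by omega) (by omega)

lemma sT_lt_iff {x p q : ℤ} (hpq : p < q) : sT x q < sT x p ↔ p = x ∧ q = x + 1 := by
  rw [sT_apply, sT_apply]
  split_ifs <;> omega

lemma sT_lt_iff' {x p q : ℤ} (hpq : p < q) : sT x p < sT x q ↔ ¬(p = x ∧ q = x + 1) := by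
  rw [sT_apply, sT_apply]
  split_ifs <;> omega

lemma invSet_one : InvSet (1 : Equiv.Perm ℤ) = ∅ := by
  ext ⟨a, b⟩
  simp only [InvSet, Set.mem_setOf_eq, Equiv.Perm.one_apply, Set.mem_empty_iff_false, iff_false]
  omega

lemma invSet_swap_mul (u : Equiv.Perm ℤ) (x : ℤ) :
    InvSet (sT x * u) =
      if u⁻¹ x < u⁻¹ (x + 1) then insert (u⁻¹ x, u⁻¹ (x + 1)) (InvSet u)
      else InvSet u \ {(u⁻¹ (x + 1), u⁻¹ x)} := by
  have hinv : ∀ y : ℤ, u (u⁻¹ y) = y := fun y => u.apply_inv_self y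
  ext ⟨a, b⟩
  simp only [InvSet, Set.mem_setOf_eq, Equiv.Perm.mul_apply]
  split_ifs with h
  · simp only [Set.mem_insert_iff, Prod.mk.injEq, Set.mem_setOf_eq]
    constructor
    · rintro ⟨hab, hlt⟩
      rcases lt_trichotomy (u a) (u b) with h1 | h1 | h1
      · obtain ⟨hx1, hx2⟩ := (sT_lt_iff h1).1 hlt
        left
        constructor
        · rw [← hx1, Equiv.Perm.inv_apply_self]
        · rw [← hx2, Equiv.Perm.inv_apply_self]
      · exact absurd (u.injective h1) (by omega)
      · exact Or.inr ⟨hab, h1⟩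
    · rintro (⟨rfl, rfl⟩ | ⟨hab, hlt⟩)
      · refine ⟨h, ?_⟩
        simp only [Equiv.Perm.apply_inv_self]
        rw [sT_apply, sT_apply]
        split_ifs <;> omega
      · refine ⟨hab, ?_⟩
        rw [sT_lt_iff' hlt]
        rintro ⟨hx1, hx2⟩
        have hb : b = u⁻¹ x := by rw [← hx1, Equiv.Perm.inv_apply_self]
        have ha : a = u⁻¹ (x + 1) := by rw [← hx2, Equiv.Perm.inv_apply_self]
        omega
  · push_neg at h
    have hne : u⁻¹ (x + 1) ≠ u⁻¹ x := fun hc => by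
      have := u⁻¹.injective hc; omega
    have h' : u⁻¹ (x + 1) < u⁻¹ x := lt_of_le_of_ne h hne
    simp only [Set.mem_diff, Set.mem_setOf_eq, Set.mem_singleton_iff, Prod.mk.injEq]
    constructor
    · rintro ⟨hab, hlt⟩
      rcases lt_trichotomy (u a) (u b) with h1 | h1 | h1
      · obtain ⟨hx1, hx2⟩ := (sT_lt_iff h1).1 hlt
        have ha : a = u⁻¹ x := by rw [← hx1, Equiv.Perm.inv_apply_self]
        have hb : b = u⁻¹ (x + 1) := by rw [← hx2, Equiv.Perm.inv_apply_self]
        omega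
      · exact absurd (u.injective h1) (by omega)
      · refine ⟨⟨hab, h1⟩, ?_⟩
        rintro ⟨rfl, rfl⟩
        simp only [Equiv.Perm.apply_inv_self, sT_apply] at hlt
        split_ifs at hlt <;> omega
    · rintro ⟨⟨hab, hlt⟩, hne2⟩
      refine ⟨hab, ?_⟩
      rw [sT_lt_iff' hlt]
      rintro ⟨hx1, hx2⟩
      have hb : b = u⁻¹ x := by rw [← hx1, Equiv.Perm.inv_apply_self]
      have ha : a = u⁻¹ (x + 1) := by rw [← hx2, Equiv.Perm.inv_apply_self]
      exact hne2 ⟨ha, hb⟩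

lemma invSet_wordProd_finite (l : List ℤ) : (InvSet (wordProd l)).Finite := by
  induction l with
  | nil => rw [wordProd_nil, invSet_one]; exact Set.finite_empty
  | cons x t ih =>
      rw [wordProd_cons, invSet_swap_mul]
      split_ifs
      · exact ih.insert _
      · exact ih.sdiff

lemma invSet_ncard_le (l : List ℤ) : (InvSet (wordProd l)).ncard ≤ l.length := by
  induction l with
  | nil => simp [wordProd_nil, invSet_one]
  | cons x t ih =>
      rw [wordProd_cons, invSet_swap_mul]
      split_ifs
      · calc _ ≤ (InvSet (wordProd t)).ncard + 1 := Set.ncard_insert_le _ _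
          _ ≤ t.length + 1 := by omega
          _ = (x :: t).length := by simp
      · calc _ ≤ (InvSet (wordProd t)).ncard :=
            Set.ncard_le_ncard Set.diff_subset (invSet_wordProd_finite t)
          _ ≤ t.length := ih
          _ ≤ (x :: t).length := by simp

end DomCK
namespace DomCK

lemma inv_strictMono_aux {u : Equiv.Perm ℤ} (h : ∀ x : ℤ, u⁻¹ x < u⁻¹ (x + 1)) :
    ∀ p q : ℤ, p < q → u⁻¹ p < u⁻¹ q := by
  have key : ∀ (k : ℕ) (p : ℤ), u⁻¹ p < u⁻¹ (p + (k : ℤ) + 1) := by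
    intro k
    induction k with
    | zero => intro p; simpa using h p
    | succ n ih =>
        intro p
        have h1 := ih p
        have h2 := h (p + (n : ℤ) + 1)
        have e : p + ((n + 1 : ℕ) : ℤ) + 1 = p + (n : ℤ) + 1 + 1 := by push_cast; ring
        rw [e]
        exact lt_trans h1 h2
  intro p q hpq
  have e : q = p + ((q - p - 1).toNat : ℤ) + 1 := by omega
  rw [e]
  exact key _ p

lemma eq_one_of_invSet_empty {u : Equiv.Perm ℤ} {t M : ℤ}
    (hb : ∀ x : ℤ, (x ≤ t ∨ M ≤ x) → u x = x) (h0 : InvSet u = ∅) : u = 1 := by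
  have mono : ∀ a b : ℤ, a < b → u a < u b := by
    intro a b hab
    have hnin : ¬(u b < u a) := fun hc => by
      have : (a, b) ∈ InvSet u := ⟨hab, hc⟩
      rw [h0] at this
      exact this
    rcases lt_trichotomy (u a) (u b) with h | h | h
    · exact h
    · exact absurd (u.injective h) (by omega)
    · exact absurd h hnin
  have key : ∀ (k : ℕ) (a : ℤ), u a + (k : ℤ) ≤ u (a + (k : ℤ)) := by
    intro k
    induction k with
    | zero => intro a; simp
    | succ n ih =>
        intro a
        have h1 := ih a
        have h2 : u (a + (n : ℤ)) < u (a + (n : ℤ) + 1) := mono _ _ (by omega)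
        have e : a + ((n + 1 : ℕ) : ℤ) = a + (n : ℤ) + 1 := by push_cast; ring
        rw [e]
        push_cast
        omega
  have key2 : ∀ (k : ℕ) (a : ℤ), u (a - (k : ℤ)) + (k : ℤ) ≤ u a := by
    intro k
    induction k with
    | zero => intro a; simp
    | succ n ih =>
        intro a
        have h1 := ih (a - 1)
        have h2 : u (a - 1) < u a := mono _ _ (by omega)
        have e : a - ((n + 1 : ℕ) : ℤ) = a - 1 - (n : ℤ) := by push_cast; ring
        rw [e]
        push_cast
        omega
  ext x
  have hle : u x ≤ x := by
    have h1 := key (max 0 (M - x)).toNat x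
    have h2 : u (x + ((max 0 (M - x)).toNat : ℤ)) = x + ((max 0 (M - x)).toNat : ℤ) :=
      hb _ (by right; omega)
    omega
  have hge : x ≤ u x := by
    have h1 := key2 (max 0 (x - t)).toNat x
    have h2 : u (x - ((max 0 (x - t)).toNat : ℤ)) = x - ((max 0 (x - t)).toNat : ℤ) :=
      hb _ (by left; omega)
    omega
  simp only [Equiv.Perm.one_apply]
  omega

lemma exists_word_ncard : ∀ (n : ℕ) (u : Equiv.Perm ℤ) (t M : ℤ),
    (∀ x : ℤ, (x ≤ t ∨ M ≤ x) → u x = x) → (InvSet u).Finite → (InvSet u).ncard = n →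
    ∃ l : List ℤ, wordProd l = u ∧ l.length = n := by
  intro n
  induction n with
  | zero =>
      intro u t M hb hfin h0
      have he : InvSet u = ∅ := (Set.ncard_eq_zero hfin).1 h0
      exact ⟨[], by rw [wordProd_nil, eq_one_of_invSet_empty hb he], rfl⟩
  | succ n ih =>
      intro u t M hb hfin h0
      have hne : InvSet u ≠ ∅ := by
        intro hc
        rw [hc, Set.ncard_empty] at h0
        omega
      have hdesc : ∃ x : ℤ, u⁻¹ (x + 1) < u⁻¹ x := by
        by_contra hc
        push_neg at hc
        have hlt : ∀ x : ℤ, u⁻¹ x < u⁻¹ (x + 1) := by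
          intro x
          have hne' : u⁻¹ x ≠ u⁻¹ (x + 1) := fun hcc => by
            have := u⁻¹.injective hcc; omega
          have := hc x
          omega
        apply hne
        ext ⟨a, b⟩
        simp only [InvSet, Set.mem_setOf_eq, Set.mem_empty_iff_false, iff_false]
        rintro ⟨hab, hlt2⟩
        have := inv_strictMono_aux hlt (u b) (u a) hlt2
        simp only [Equiv.Perm.inv_apply_self] at this
        omega
      obtain ⟨x, hx⟩ := hdesc
      have hstep := invSet_swap_mul u x
      rw [if_neg (by omega)] at hstep
      have hmem : (u⁻¹ (x + 1), u⁻¹ x) ∈ InvSet u := by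
        refine ⟨hx, ?_⟩
        simp only [Equiv.Perm.apply_inv_self]
        omega
      have hfin1 : (InvSet (sT x * u)).Finite := by rw [hstep]; exact hfin.sdiff
      have hn1 : (InvSet (sT x * u)).ncard = n := by
        rw [hstep, Set.ncard_sdiff_singleton_of_mem hmem, h0]
        omega
      have hb1 : ∀ y : ℤ, (y ≤ min t (x - 1) ∨ max M (x + 2) ≤ y) → (sT x * u) y = y := by
        intro y hy
        rw [Equiv.Perm.mul_apply, hb y (by omega)]
        exact sT_fix (by omega) (by omega)
      obtain ⟨m, hm, hlen⟩ := ih (sT x * u) _ _ hb1 hfin1 hn1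
      refine ⟨x :: m, ?_, by simp [hlen]⟩
      rw [wordProd_cons, hm, ← mul_assoc, sT_mul_self, one_mul]

lemma lenOf_eq_ncard {u : Equiv.Perm ℤ} {l0 : List ℤ} (h0 : wordProd l0 = u) :
    lenOf u = (InvSet u).ncard := by
  obtain ⟨t, M, hb⟩ := exists_bounds l0
  rw [h0] at hb
  have hfin : (InvSet u).Finite := h0 ▸ invSet_wordProd_finite l0
  obtain ⟨l, hl, hlen⟩ := exists_word_ncard _ u t M hb hfin rfl
  apply le_antisymm
  · exact Nat.sInf_le ⟨l, hl, hlen⟩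
  · refine le_csInf ⟨_, l, hl, hlen⟩ ?_
    rintro m ⟨l', hl', rfl⟩
    calc (InvSet u).ncard = (InvSet (wordProd l')).ncard := by rw [hl']
      _ ≤ l'.length := invSet_ncard_le l'

lemma isReduced_iff {u : Equiv.Perm ℤ} {l0 : List ℤ} (h0 : wordProd l0 = u) (l : List ℤ) :
    IsReducedWord u l ↔ wordProd l = u ∧ l.length = (InvSet u).ncard := by
  have hfin : (InvSet u).Finite := h0 ▸ invSet_wordProd_finite l0
  obtain ⟨t, M, hb⟩ := exists_bounds l0
  rw [h0] at hb
  obtain ⟨lr, hlr, hlen⟩ := exists_word_ncard _ u t M hb hfin rfl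
  constructor
  · rintro ⟨hprod, hmin⟩
    refine ⟨hprod, le_antisymm ?_ ?_⟩
    · calc l.length ≤ lr.length := hmin lr hlr
        _ = _ := hlen
    · calc (InvSet u).ncard = (InvSet (wordProd l)).ncard := by rw [hprod]
        _ ≤ l.length := invSet_ncard_le l
  · rintro ⟨hprod, hl⟩
    refine ⟨hprod, fun m hm => ?_⟩
    rw [hl]
    calc (InvSet u).ncard = (InvSet (wordProd m)).ncard := by rw [hm]
      _ ≤ m.length := invSet_ncard_le m

lemma exists_reduced {u : Equiv.Perm ℤ} {l0 : List ℤ} (h0 : wordProd l0 = u) :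
    ∃ l : List ℤ, IsReducedWord u l := by
  have hfin : (InvSet u).Finite := h0 ▸ invSet_wordProd_finite l0
  obtain ⟨t, M, hb⟩ := exists_bounds l0
  rw [h0] at hb
  obtain ⟨lr, hlr, hlen⟩ := exists_word_ncard _ u t M hb hfin rfl
  exact ⟨lr, (isReduced_iff h0 lr).2 ⟨hlr, hlen⟩⟩

lemma reduced_cons_descent {u : Equiv.Perm ℤ} {x : ℤ} {m : List ℤ}
    (h : IsReducedWord u (x :: m)) :
    u⁻¹ (x + 1) < u⁻¹ x ∧ IsReducedWord (sT x * u) m := by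
  have hprod : wordProd (x :: m) = u := h.1
  have hm : wordProd m = sT x * u := by
    rw [← hprod, wordProd_cons, ← mul_assoc, sT_mul_self, one_mul]
  have hfin : (InvSet u).Finite := hprod ▸ invSet_wordProd_finite (x :: m)
  have hlen : (x :: m).length = (InvSet u).ncard := ((isReduced_iff hprod _).1 h).2
  have hle : (InvSet (sT x * u)).ncard ≤ m.length := hm ▸ invSet_ncard_le m
  have hstep := invSet_swap_mul u x
  have hdesc : u⁻¹ (x + 1) < u⁻¹ x := by
    by_contra hc
    push_neg at hc
    have hne' : u⁻¹ x ≠ u⁻¹ (x + 1) := fun hcc => by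
      have := u⁻¹.injective hcc; omega
    have hlt : u⁻¹ x < u⁻¹ (x + 1) := by omega
    rw [if_pos hlt] at hstep
    have hnin : (u⁻¹ x, u⁻¹ (x + 1)) ∉ InvSet u := by
      rintro ⟨-, hcc⟩
      simp only [Equiv.Perm.apply_inv_self] at hcc
      omega
    have : (InvSet (sT x * u)).ncard = (InvSet u).ncard + 1 := by
      rw [hstep, Set.ncard_insert_of_notMem hnin hfin]
    simp only [List.length_cons] at hlen
    omega
  refine ⟨hdesc, ?_⟩
  rw [if_neg (by omega)] at hstep
  have hmem : (u⁻¹ (x + 1), u⁻¹ x) ∈ InvSet u := by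
    refine ⟨hdesc, ?_⟩
    simp only [Equiv.Perm.apply_inv_self]
    omega
  have hn1 : (InvSet (sT x * u)).ncard = (InvSet u).ncard - 1 := by
    rw [hstep, Set.ncard_sdiff_singleton_of_mem hmem]
  refine (isReduced_iff hm m).2 ⟨hm, ?_⟩
  simp only [List.length_cons] at hlen
  have hpos : 1 ≤ (InvSet u).ncard := by omega
  omega

lemma support_letters : ∀ (l : List ℤ) (u : Equiv.Perm ℤ) (t : ℤ),
    (∀ x ≤ t, u x = x) → IsReducedWord u l → ∀ i ∈ l, t + 1 ≤ i := by
  intro l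
  induction l with
  | nil => intro u t _ _ i hi; simp at hi
  | cons x m ih =>
      intro u t hfix hred
      obtain ⟨hdesc, hred1⟩ := reduced_cons_descent hred
      have hfixinv : ∀ y ≤ t, u⁻¹ y = y := by
        intro y hy
        apply u.injective
        rw [Equiv.Perm.apply_inv_self, hfix y hy]
      have hx : t + 1 ≤ x := by
        by_contra hc
        push_neg at hc
        rcases lt_or_eq_of_le (by omega : x + 1 ≤ t + 1) with h1 | h1
        · have e1 := hfixinv x (by omega)
          have e2 := hfixinv (x + 1) (by omega)
          omega
        · have e1 := hfixinv x (by omega)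
          have e2 : t + 1 ≤ u⁻¹ (x + 1) := by
            by_contra hc2
            push_neg at hc2
            have := hfix (u⁻¹ (x + 1)) (by omega)
            rw [Equiv.Perm.apply_inv_self] at this
            omega
          omega
      intro i hi
      rcases List.mem_cons.1 hi with rfl | hi'
      · exact hx
      · refine ih (sT x * u) t ?_ hred1 i hi'
        intro y hy
        rw [Equiv.Perm.mul_apply, hfix y hy]
        exact sT_fix (by omega) (by omega)

lemma reduced_append {u : Equiv.Perm ℤ} {p s : List ℤ} (h : IsReducedWord u (p ++ s)) :
    IsReducedWord (wordProd p) p ∧ IsReducedWord (wordProd s) s := by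
  have hps : wordProd p * wordProd s = u := by rw [← wordProd_append]; exact h.1
  constructor
  · refine ⟨rfl, fun m hm => ?_⟩
    have := h.2 (m ++ s) (by rw [wordProd_append, hm, hps])
    simp only [List.length_append] at this
    omega
  · refine ⟨rfl, fun m hm => ?_⟩
    have := h.2 (p ++ m) (by rw [wordProd_append, hm, hps])
    simp only [List.length_append] at this
    omega

lemma reduced_reverse {u : Equiv.Perm ℤ} {l : List ℤ} (h : IsReducedWord u l) :
    IsReducedWord u⁻¹ l.reverse := by
  refine ⟨by rw [wordProd_reverse, h.1], fun m hm => ?_⟩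
  have := h.2 m.reverse (by rw [wordProd_reverse, hm, inv_inv])
  simpa using this

end DomCK
namespace DomCK

set_option maxHeartbeats 1000000 in
lemma sT_comm {a c : ℤ} (h : a + 2 ≤ c) : sT a * sT c = sT c * sT a := by
  ext x
  simp only [Equiv.Perm.mul_apply, sT_apply]
  split_ifs <;> omega

set_option maxHeartbeats 1000000 in
lemma sT_braid (a : ℤ) : sT a * sT (a + 1) * sT a = sT (a + 1) * sT a * sT (a + 1) := by
  ext x
  simp only [Equiv.Perm.mul_apply, sT_apply]
  split_ifs <;> omega

lemma wordProd_triple (u v : List ℤ) (x y z : ℤ) :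
    wordProd (u ++ x :: y :: z :: v) = wordProd u * wordProd [x, y, z] * wordProd v := by
  rw [show u ++ x :: y :: z :: v = u ++ [x, y, z] ++ v by simp, wordProd_append, wordProd_append]

lemma ckstep_prod {l l' : List ℤ} (h : CKStep l l') : wordProd l = wordProd l' := by
  cases h with
  | acb u v h1 h2 =>
      rename_i a b c
      rw [wordProd_triple, wordProd_triple]
      congr 2
      simp only [wordProd_cons, wordProd_nil, mul_one]
      rw [← mul_assoc, ← mul_assoc, sT_comm (by omega : a + 2 ≤ c)]
  | bca u v h1 h2 =>
      rename_i a b c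
      rw [wordProd_triple, wordProd_triple]
      congr 2
      simp only [wordProd_cons, wordProd_nil, mul_one]
      have hcomm := sT_comm (by omega : a + 2 ≤ c)
      rw [← hcomm]
  | braid u v hb =>
      rename_i a b
      rw [wordProd_triple, wordProd_triple]
      congr 2
      simp only [wordProd_cons, wordProd_nil, mul_one]
      rcases hb with rfl | rfl
      · rw [← mul_assoc, ← mul_assoc]
        exact sT_braid a
      · rw [← mul_assoc, ← mul_assoc]
        have := (sT_braid (a - 1)).symm
        simpa using this

lemma ckstep_length {l l' : List ℤ} (h : CKStep l l') : l.length = l'.length := by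
  cases h <;> simp

lemma ckstep_context {a b u v : List ℤ} (h : CKStep a b) :
    CKStep (u ++ a ++ v) (u ++ b ++ v) := by
  cases h with
  | acb u' v' h1 h2 =>
      have := CKStep.acb (u ++ u') (v' ++ v) h1 h2
      simpa [List.append_assoc] using this
  | bca u' v' h1 h2 =>
      have := CKStep.bca (u ++ u') (v' ++ v) h1 h2
      simpa [List.append_assoc] using this
  | braid u' v' hb =>
      have := CKStep.braid (u ++ u') (v' ++ v) hb
      simpa [List.append_assoc] using this

lemma ckequiv_refl (l : List ℤ) : CKEquiv l l := Relation.EqvGen.refl l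

lemma ckequiv_symm {a b : List ℤ} (h : CKEquiv a b) : CKEquiv b a := Relation.EqvGen.symm _ _ h

lemma ckequiv_trans {a b c : List ℤ} (h1 : CKEquiv a b) (h2 : CKEquiv b c) : CKEquiv a c :=
  Relation.EqvGen.trans _ _ _ h1 h2

lemma ckequiv_of_step {a b : List ℤ} (h : CKStep a b) : CKEquiv a b := Relation.EqvGen.rel _ _ h

lemma ckequiv_context {a b : List ℤ} (u v : List ℤ) (h : CKEquiv a b) :
    CKEquiv (u ++ a ++ v) (u ++ b ++ v) := by
  induction h with
  | rel x y hxy => exact ckequiv_of_step (ckstep_context hxy)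
  | refl x => exact ckequiv_refl _
  | symm x y _ ih => exact ckequiv_symm ih
  | trans x y z _ _ ih1 ih2 => exact ckequiv_trans ih1 ih2

lemma ckequiv_append_left (u : List ℤ) {a b : List ℤ} (h : CKEquiv a b) :
    CKEquiv (u ++ a) (u ++ b) := by
  have := ckequiv_context u [] h
  simpa using this

lemma ckequiv_append_right {a b : List ℤ} (v : List ℤ) (h : CKEquiv a b) :
    CKEquiv (a ++ v) (b ++ v) := by
  have := ckequiv_context [] v h
  simpa using this

lemma ckequiv_prod {a b : List ℤ} (h : CKEquiv a b) : wordProd a = wordProd b := by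
  induction h with
  | rel x y hxy => exact ckstep_prod hxy
  | refl x => rfl
  | symm x y _ ih => exact ih.symm
  | trans x y z _ _ ih1 ih2 => exact ih1.trans ih2

lemma ckequiv_length {a b : List ℤ} (h : CKEquiv a b) : a.length = b.length := by
  induction h with
  | rel x y hxy => exact ckstep_length hxy
  | refl x => rfl
  | symm x y _ ih => exact ih.symm
  | trans x y z _ _ ih1 ih2 => exact ih1.trans ih2

lemma ckstep_reverse {a b : List ℤ} (h : CKStep a b) : CKStep a.reverse b.reverse := by
  cases h with
  | acb u v h1 h2 =>
      have := CKStep.bca v.reverse u.reverse h1 h2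
      simpa [List.reverse_append] using this
  | bca u v h1 h2 =>
      have := CKStep.acb v.reverse u.reverse h1 h2
      simpa [List.reverse_append] using this
  | braid u v hb =>
      have := CKStep.braid v.reverse u.reverse hb
      simpa [List.reverse_append] using this

lemma ckequiv_reverse {a b : List ℤ} (h : CKEquiv a b) : CKEquiv a.reverse b.reverse := by
  induction h with
  | rel x y hxy => exact ckequiv_of_step (ckstep_reverse hxy)
  | refl x => exact ckequiv_refl _
  | symm x y _ ih => exact ckequiv_symm ih
  | trans x y z _ _ ih1 ih2 => exact ckequiv_trans ih1 ih2

lemma reduced_of_ckequiv {w : Equiv.Perm ℤ} {l m : List ℤ}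
    (hl : IsReducedWord w l) (h : CKEquiv l m) : IsReducedWord w m := by
  refine ⟨by rw [← ckequiv_prod h]; exact hl.1, fun m' hm' => ?_⟩
  rw [← ckequiv_length h]
  exact hl.2 m' hm'

end DomCK
namespace DomCK

/-- Edelman–Greene row insertion. -/
def rowIns : List ℤ → ℤ → List ℤ × Option ℤ
  | [], x => ([x], none)
  | b :: t, x =>
    if b < x then
      let r := rowIns t x
      (b :: r.1, r.2)
    else if b = x then (b :: t, some (x + 1))
    else (x :: t, some b)

/-- Edelman–Greene insertion into a tableau (rows listed top-down). -/
def insertT : List (List ℤ) → ℤ → List (List ℤ)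
  | [], x => [[x]]
  | r :: rest, x =>
    match rowIns r x with
    | (r', none) => r' :: rest
    | (r', some y) => r' :: insertT rest y

lemma rowword_nil : rowword [] = [] := rfl

lemma rowword_cons (r : List ℤ) (rest : List (List ℤ)) :
    rowword (r :: rest) = rowword rest ++ r := by
  simp [rowword]

lemma revrow_eq_reverse_rowword (T : List (List ℤ)) : revrow T = (rowword T).reverse := rfl

lemma ck_move_left : ∀ (t : List ℤ) (p x : ℤ), x < p → (∀ e ∈ t, p < e) →
    t.Pairwise (· < ·) → CKEquiv (p :: (t ++ [x])) (p :: x :: t) := by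
  intro t
  induction t with
  | nil => intro p x _ _ _; exact ckequiv_refl _
  | cons e s ih =>
      intro p x hxp ht hsort
      have hpe : p < e := ht e (by simp)
      have h1 : CKEquiv (e :: (s ++ [x])) (e :: x :: s) := by
        refine ih e x (lt_trans hxp hpe) ?_ (List.pairwise_cons.1 hsort).2
        intro f hf
        exact (List.pairwise_cons.1 hsort).1 f hf
      have h2 : CKEquiv (p :: e :: (s ++ [x])) (p :: e :: x :: s) := by
        have := ckequiv_append_left [p] h1
        simpa using this
      refine ckequiv_trans h2 (ckequiv_of_step ?_)
      have := CKStep.bca [] s hxp hpe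
      simpa using this

lemma wordProd_comm_sT {t : List ℤ} {x : ℤ} (h : ∀ e ∈ t, x + 2 ≤ e) :
    sT x * wordProd t = wordProd t * sT x := by
  induction t with
  | nil => simp [wordProd_nil]
  | cons e s ih =>
      rw [wordProd_cons, ← mul_assoc, sT_comm (h e (by simp)), mul_assoc,
        ih (fun f hf => h f (by simp [hf])), ← mul_assoc]

/-- Word-level behaviour of row insertion. -/
lemma rowIns_word {r : List ℤ} (hs : r.Pairwise (· < ·)) (x : ℤ) :
    ((rowIns r x).2 = none ∧ (rowIns r x).1 = r ++ [x]) ∨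
    (∃ y, (rowIns r x).2 = some y ∧ CKEquiv (r ++ [x]) (y :: (rowIns r x).1)) ∨
    (∃ m : List ℤ, wordProd m = wordProd (r ++ [x]) ∧ m.length < (r ++ [x]).length) := by
  induction r with
  | nil => left; exact ⟨rfl, rfl⟩
  | cons b t ih =>
      have hst : t.Pairwise (· < ·) := (List.pairwise_cons.1 hs).2
      have hbt : ∀ e ∈ t, b < e := (List.pairwise_cons.1 hs).1
      rcases lt_trichotomy b x with hbx | hbx | hbx
      · -- b < x : recurse
        rcases ih hst with ⟨hnone, heq⟩ | ⟨y, hsome, hck⟩ | ⟨m, hm, hlen⟩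
        · left
          constructor
          · simp [rowIns, if_pos hbx, hnone]
          · simp [rowIns, if_pos hbx, heq]
        · right; left
          refine ⟨y, by simp [rowIns, if_pos hbx, hsome], ?_⟩
          -- head facts about (rowIns t x).1
          have hhead : ∃ h0 t2, (rowIns t x).1 = h0 :: t2 ∧ h0 ≤ x ∧ (h0 = x ∨ h0 ∈ t) ∧ x < y := by
            rcases t with - | ⟨c, s⟩
            · -- t = [] : rowIns [] x = ([x], none), contradiction with hsome
              simp [rowIns] at hsome
            · by_cases hcx : c < x
              · refine ⟨c, ((rowIns s x).1), by simp [rowIns, if_pos hcx], le_of_lt hcx,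
                  Or.inr (by simp), ?_⟩
                -- x < y : bumped value exceeds x
                have hy : ∀ (u : List ℤ), u.Pairwise (· < ·) → ∀ z y', (rowIns u z).2 = some y' → z < y' := by
                  intro u
                  induction u with
                  | nil => intro _ z y' h'; simp [rowIns] at h'
                  | cons d v ihv =>
                      intro hsv z y' h'
                      by_cases hdz : d < z
                      · simp [rowIns, if_pos hdz] at h'
                        exact ihv (List.pairwise_cons.1 hsv).2 z y' h'
                      · by_cases hdz2 : d = z
                        · simp [rowIns, if_neg hdz, if_pos hdz2] at h'
                          omega
                        · simp [rowIns, if_neg hdz, if_neg hdz2] at h'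
                          omega
                exact hy (c :: s) hst x y (by simpa [rowIns, if_pos hcx] using hsome)
              · by_cases hcx2 : c = x
                · refine ⟨c, s, by simp [rowIns, if_neg hcx, if_pos hcx2], le_of_eq hcx2,
                    Or.inr (by simp), ?_⟩
                  have : y = x + 1 := by
                    simp [rowIns, if_neg hcx, if_pos hcx2] at hsome
                    omega
                  omega
                · refine ⟨x, s, by simp [rowIns, if_neg hcx, if_neg hcx2], le_refl x,
                    Or.inl rfl, ?_⟩
                  have : y = c := by
                    simp [rowIns, if_neg hcx, if_neg hcx2] at hsome
                    omega
                  omega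
          obtain ⟨h0, t2, ht2, hh0x, hh0mem, hxy⟩ := hhead
          have hbh0 : b < h0 := by
            rcases hh0mem with rfl | hmem
            · exact hbx
            · exact hbt h0 hmem
          have hck2 : CKEquiv (b :: (t ++ [x])) (b :: y :: h0 :: t2) := by
            have := ckequiv_append_left [b] hck
            rw [ht2] at this
            simpa using this
          have hstep : CKStep (b :: y :: h0 :: t2) (y :: b :: h0 :: t2) := by
            have := CKStep.acb ([] : List ℤ) t2 hbh0 (lt_of_le_of_lt hh0x hxy)
            simpa using this
          have : CKEquiv ((b :: t) ++ [x]) (y :: b :: h0 :: t2) :=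
            ckequiv_trans (by simpa using hck2) (ckequiv_of_step hstep)
          simpa [rowIns, if_pos hbx, ht2] using this
        · right; right
          refine ⟨b :: m, ?_, by simpa using hlen⟩
          rw [wordProd_cons, hm]
          simp [wordProd_cons]
      · -- b = x : special case
        subst hbx
        rcases t with - | ⟨c, s⟩
        · -- r = [b], word [b, b] not reduced
          right; right
          refine ⟨[], ?_, by simp⟩
          simp [wordProd_nil, wordProd_cons, ← mul_assoc, sT_mul_self]
        · by_cases hc : c = b + 1
          · subst hc
            right; left
            refine ⟨b + 1, by simp [rowIns], ?_⟩
            have hss : s.Pairwise (· < ·) := (List.pairwise_cons.1 hst).2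
            have hsall : ∀ e ∈ s, b + 1 < e := (List.pairwise_cons.1 hst).1
            have h1 : CKEquiv ((b + 1) :: (s ++ [b])) ((b + 1) :: b :: s) :=
              ck_move_left s (b + 1) b (by omega) hsall hss
            have h2 : CKEquiv (b :: (b + 1) :: (s ++ [b])) (b :: (b + 1) :: b :: s) := by
              have := ckequiv_append_left [b] h1
              simpa using this
            have h3 : CKStep (b :: (b + 1) :: b :: s) ((b + 1) :: b :: (b + 1) :: s) := by
              have := CKStep.braid ([] : List ℤ) s (Or.inl rfl : b + 1 = b + 1 ∨ b + 1 = b - 1)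
              simpa using this
            have := ckequiv_trans h2 (ckequiv_of_step h3)
            simp only [rowIns, lt_irrefl, if_neg (lt_irrefl b), if_pos rfl]
            simpa using this
          · -- c ≥ b + 2 : not reduced
            right; right
            have hcb : b + 2 ≤ c := by
              have : b < c := (List.pairwise_cons.1 hs).1 c (by simp)
              omega
            refine ⟨c :: s, ?_, by simp⟩
            have hall : ∀ e ∈ c :: s, b + 2 ≤ e := by
              intro e he
              rcases List.mem_cons.1 he with rfl | hes
              · exact hcb
              · have := (List.pairwise_cons.1 hst).1 e hes
                omega
            have hcomm := wordProd_comm_sT hall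
            symm
            show wordProd (b :: ((c :: s) ++ [b])) = wordProd (c :: s)
            rw [wordProd_cons, wordProd_append, ← mul_assoc, hcomm, mul_assoc]
            simp [wordProd_cons, wordProd_nil, ← mul_assoc, sT_mul_self]
      · -- b > x : immediate bump
        right; left
        have : rowIns (b :: t) x = (x :: t, some b) := by
          simp [rowIns, if_neg (by omega : ¬ b < x), if_neg (by omega : ¬ b = x)]
        rw [this]
        refine ⟨b, rfl, ?_⟩
        exact ck_move_left t b x hbx hbt hst

end DomCK
namespace DomCK

def RowLt (r₁ r₂ : List ℤ) : Prop :=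
  r₂.length ≤ r₁.length ∧ ∀ i < r₂.length, r₁.getD i 0 < r₂.getD i 0

def Tab (T : List (List ℤ)) : Prop :=
  T.IsChain RowLt ∧ ∀ r ∈ T, r ≠ [] ∧ r.Pairwise (· < ·)

def BumpRel (r : List ℤ) (x : ℤ) (r' : List ℤ) (y : ℤ) : Prop :=
  (∃ A B, r = A ++ y :: B ∧ r' = A ++ x :: B ∧ (∀ a ∈ A, a < x) ∧ x < y) ∨
  (r' = r ∧ ∃ A B, r = A ++ x :: B ∧ y = x + 1 ∧ (∀ a ∈ A, a < x))

def HeadRel (r : List ℤ) (x : ℤ) (r' : List ℤ) : Prop :=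
  (r' = r ++ [x] ∧ ∀ b ∈ r, b < x) ∨
  (∃ A B z, r = A ++ z :: B ∧ r' = A ++ x :: B ∧ (∀ a ∈ A, a < x) ∧ x < z) ∨
  r' = r

lemma getD_mem {l : List ℤ} {i : ℕ} (h : i < l.length) : l.getD i 0 ∈ l := by
  rw [List.getD_eq_getElem l 0 h]
  exact List.getElem_mem h

lemma getD_cons_of_pos (a : ℤ) (l : List ℤ) (n : ℕ) (h : 0 < n) :
    (a :: l).getD n 0 = l.getD (n - 1) 0 := by
  cases n with
  | zero => omega
  | succ m => simp [List.getD_cons_succ]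

lemma rowIns_none_spec : ∀ {r : List ℤ} {x : ℤ} {r' : List ℤ},
    rowIns r x = (r', none) → r' = r ++ [x] ∧ ∀ b ∈ r, b < x := by
  intro r
  induction r with
  | nil => intro x r' h; simp [rowIns] at h; simp [← h]
  | cons b t ih =>
      intro x r' h
      rcases h' : rowIns t x with ⟨t', o⟩
      simp only [rowIns, h'] at h
      split_ifs at h with h1 h2
      · simp only [Prod.mk.injEq] at h
        obtain ⟨e1, e2⟩ := ih (by rw [h', h.2])
        constructor
        · rw [← h.1, e1]; rfl
        · intro c hc
          rcases List.mem_cons.1 hc with rfl | hc'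
          · exact h1
          · exact e2 c hc'
      · simp at h
      · simp at h

lemma rowIns_some_spec : ∀ {r : List ℤ} {x : ℤ} {r' : List ℤ} {y : ℤ},
    rowIns r x = (r', some y) → BumpRel r x r' y := by
  intro r
  induction r with
  | nil => intro x r' y h; simp [rowIns] at h
  | cons b t ih =>
      intro x r' y h
      rcases h' : rowIns t x with ⟨t', o⟩
      simp only [rowIns, h'] at h
      split_ifs at h with h1 h2
      · simp only [Prod.mk.injEq] at h
        have hb : BumpRel t x t' y := ih (by rw [h', h.2])
        rcases hb with ⟨A, B, ha, hb', hA, hxy⟩ | ⟨hb', A, B, ha, hy, hA⟩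
        · left
          refine ⟨b :: A, B, by rw [ha]; rfl, by rw [← h.1, hb']; rfl, ?_, hxy⟩
          intro a haa
          rcases List.mem_cons.1 haa with rfl | ha2
          · exact h1
          · exact hA a ha2
        · right
          refine ⟨by rw [← h.1, hb'], b :: A, B, by rw [ha]; rfl, hy, ?_⟩
          intro a haa
          rcases List.mem_cons.1 haa with rfl | ha2
          · exact h1
          · exact hA a ha2
      · simp only [Prod.mk.injEq, Option.some.injEq] at h
        subst h2
        right
        exact ⟨h.1.symm, [], t, rfl, h.2.symm, by simp⟩
      · simp only [Prod.mk.injEq, Option.some.injEq] at h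
        left
        refine ⟨[], t, by simp [h.2], by simp [h.1], by simp, by omega⟩

lemma sorted_replace {A B : List ℤ} {x y : ℤ} (hs : (A ++ y :: B).Pairwise (· < ·))
    (hA : ∀ a ∈ A, a < x) (hxy : x < y) : (A ++ x :: B).Pairwise (· < ·) := by
  rw [List.pairwise_append] at hs ⊢
  obtain ⟨hA', hyB, hcross⟩ := hs
  refine ⟨hA', ?_, ?_⟩
  · rw [List.pairwise_cons] at hyB ⊢
    exact ⟨fun b hb => lt_trans hxy (hyB.1 b hb), hyB.2⟩
  · intro a ha b hb
    rcases List.mem_cons.1 hb with rfl | hb'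
    · exact hA a ha
    · exact hcross a ha b (by simp [hb'])

lemma bump_facts {r r' : List ℤ} {x y : ℤ} (hs : r.Pairwise (· < ·)) (hb : BumpRel r x r' y) :
    r'.Pairwise (· < ·) ∧ r'.length = r.length ∧ x < y ∧
      ∃ j, j < r.length ∧ r'.getD j 0 = x ∧ x ≤ r.getD j 0 ∧
        (∀ i, i < j → r.getD i 0 < x) ∧
        (∀ i, i ≠ j → r'.getD i 0 = r.getD i 0) ∧
        (∀ v : ℤ, r.getD j 0 < v → v < y → False) := by
  have key : ∀ (A B : List ℤ) (c c' : ℤ), (∀ a ∈ A, a < x) →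
      ∀ i, i < A.length → (A ++ c :: B).getD i 0 < x := by
    intro A B c c' hA i hi
    rw [List.getD_append _ _ _ _ hi]
    exact hA _ (getD_mem hi)
  have keyeq : ∀ (A B : List ℤ) (c c' : ℤ), ∀ i, i ≠ A.length →
      (A ++ c :: B).getD i 0 = (A ++ c' :: B).getD i 0 := by
    intro A B c c' i hi
    rcases lt_or_gt_of_ne hi with h1 | h1
    · rw [List.getD_append _ _ _ _ h1, List.getD_append _ _ _ _ h1]
    · rw [List.getD_append_right _ _ _ _ (by omega), List.getD_append_right _ _ _ _ (by omega),
        getD_cons_of_pos _ _ _ (by omega), getD_cons_of_pos _ _ _ (by omega)]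
  have keyget : ∀ (A B : List ℤ) (c : ℤ), (A ++ c :: B).getD A.length 0 = c := by
    intro A B c
    rw [List.getD_append_right _ _ _ _ (le_refl _)]
    simp
  rcases hb with ⟨A, B, hr, hr', hA, hxy⟩ | ⟨hr', A, B, hr, hy, hA⟩
  · subst hr; subst hr'
    refine ⟨sorted_replace hs hA hxy, by simp, hxy, A.length, by simp, keyget A B x,
      by rw [keyget A B y]; omega, ?_, fun i hi => keyeq A B x y i hi, ?_⟩
    · intro i hi
      exact key A B y y hA i hi
    · intro v h1 h2
      rw [keyget A B y] at h1
      omega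
  · subst hr'; subst hr; subst hy
    refine ⟨hs, rfl, by omega, A.length, by simp, keyget A B x, by rw [keyget A B x],
      fun i hi => key A B x x hA i hi, fun i _ => rfl, ?_⟩
    intro v h1 h2
    rw [keyget A B x] at h1
    omega

lemma interface_newrow {r r' : List ℤ} {x y : ℤ} (hs : r.Pairwise (· < ·))
    (hb : BumpRel r x r' y) : RowLt r' [y] := by
  obtain ⟨hs', hlen', hxy, j, hj, hr'j, hxrj, hlt, heq, hgap⟩ := bump_facts hs hb
  constructor
  · simp; omega
  · intro i hi
    simp only [List.length_singleton] at hi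
    interval_cases i
    simp only [List.getD_cons_zero]
    rcases Nat.eq_zero_or_pos j with rfl | hj0
    · omega
    · have h1 := hlt 0 hj0
      have h2 := heq 0 (by omega)
      omega

lemma interface {r r' h h' : List ℤ} {x y : ℤ}
    (hs : r.Pairwise (· < ·)) (hbump : BumpRel r x r' y)
    (hrl : RowLt r h) (hhr : HeadRel h y h') : RowLt r' h' := by
  obtain ⟨hs', hlen', hxy, j, hj, hr'j, hxrj, hlt, heq, hgap⟩ := bump_facts hs hbump
  obtain ⟨hlh, hcol⟩ := hrl
  have hler : ∀ i, r'.getD i 0 ≤ r.getD i 0 := by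
    intro i
    rcases eq_or_ne i j with rfl | hne
    · omega
    · rw [heq i hne]
  rcases hhr with ⟨hh', hall⟩ | ⟨A, B, z, hh, hh', hA, hyz⟩ | hh'
  · -- append case
    have hjh : h.length ≤ j := by
      by_contra hc
      push_neg at hc
      have h1 := hcol j hc
      have h2 : h.getD j 0 < y := hall _ (getD_mem hc)
      exact hgap _ h1 h2
    constructor
    · rw [hh']; simp; omega
    · intro i hi
      rw [hh'] at hi ⊢
      simp only [List.length_append, List.length_singleton] at hi
      by_cases hih : i < h.length
      · rw [List.getD_append _ _ _ _ hih]
        exact lt_of_le_of_lt (hler i) (hcol i hih)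
      · have hieq : i = h.length := by omega
        subst hieq
        rw [List.getD_append_right _ _ _ _ (le_refl _)]
        simp only [Nat.sub_self, List.getD_cons_zero]
        rcases eq_or_ne h.length j with hje | hne
        · rw [hje]; omega
        · have hlt2 : h.length < j := by omega
          have := hlt h.length hlt2
          rw [heq _ hne]
          omega
  · -- replace case
    have hqh : A.length < h.length := by rw [hh]; simp
    have hqj : A.length ≤ j := by
      by_contra hc
      push_neg at hc
      have h1 := hcol j (by omega)
      have h2 : h.getD j 0 < y := by
        rw [hh, List.getD_append _ _ _ _ hc]
        exact hA _ (getD_mem hc)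
      exact hgap _ h1 h2
    have hlh' : h'.length = h.length := by rw [hh', hh]; simp
    constructor
    · omega
    · intro i hi
      by_cases hiq : i = A.length
      · subst hiq
        have e1 : h'.getD A.length 0 = y := by
          rw [hh', List.getD_append_right _ _ _ _ (le_refl _)]
          simp
        rw [e1]
        rcases eq_or_ne A.length j with hje | hne
        · rw [hje]; omega
        · have := hlt A.length (by omega)
          rw [heq _ hne]
          omega
      · have e1 : h'.getD i 0 = h.getD i 0 := by
          rw [hh', hh]
          rcases lt_or_gt_of_ne hiq with h1 | h1
          · rw [List.getD_append _ _ _ _ h1, List.getD_append _ _ _ _ h1]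
          · rw [List.getD_append_right _ _ _ _ (by omega),
              List.getD_append_right _ _ _ _ (by omega),
              getD_cons_of_pos _ _ _ (by omega), getD_cons_of_pos _ _ _ (by omega)]
        rw [e1]
        exact lt_of_le_of_lt (hler i) (hcol i (by omega))
  · subst hh'
    exact ⟨by omega, fun i hi => lt_of_le_of_lt (hler i) (hcol i hi)⟩

end DomCK
namespace DomCK

lemma insertT_nil (x : ℤ) : insertT [] x = [[x]] := rfl

lemma insertT_cons_none {r : List ℤ} {x : ℤ} {r' : List ℤ} (rest : List (List ℤ))
    (h : rowIns r x = (r', none)) : insertT (r :: rest) x = r' :: rest := by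
  simp [insertT, h]

lemma insertT_cons_some {r : List ℤ} {x : ℤ} {r' : List ℤ} {y : ℤ} (rest : List (List ℤ))
    (h : rowIns r x = (r', some y)) : insertT (r :: rest) x = r' :: insertT rest y := by
  simp [insertT, h]

lemma tab_nil : Tab [] := ⟨List.isChain_nil, by simp⟩

lemma tab_cons_iff {r : List ℤ} {rest : List (List ℤ)} :
    Tab (r :: rest) ↔ (r ≠ [] ∧ r.Pairwise (· < ·)) ∧ Tab rest ∧
      ∀ hd ∈ rest.head?, RowLt r hd := by
  constructor
  · rintro ⟨hchain, hrows⟩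
    obtain ⟨hlink, hchain'⟩ := List.isChain_cons.1 hchain
    exact ⟨hrows r (by simp), ⟨hchain', fun s hs => hrows s (by simp [hs])⟩, hlink⟩
  · rintro ⟨hr, ⟨hchain, hrows⟩, hlink⟩
    refine ⟨List.isChain_cons.2 ⟨hlink, hchain⟩, ?_⟩
    intro s hs
    rcases List.mem_cons.1 hs with rfl | hs'
    · exact hr
    · exact hrows s hs'

lemma insertT_spec : ∀ (T : List (List ℤ)), Tab T → ∀ x : ℤ,
    Tab (insertT T x) ∧
      ((T = [] ∧ insertT T x = [[x]]) ∨
       (∃ r rest r' rest', T = r :: rest ∧ insertT T x = r' :: rest' ∧ HeadRel r x r')) := by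
  intro T
  induction T with
  | nil =>
      intro _ x
      refine ⟨?_, Or.inl ⟨rfl, rfl⟩⟩
      rw [insertT_nil]
      exact tab_cons_iff.2 ⟨⟨by simp, by simp⟩, tab_nil, by simp⟩
  | cons r rest ih =>
      intro hT x
      obtain ⟨⟨hrne, hrs⟩, hTrest, hlink⟩ := tab_cons_iff.1 hT
      rcases hins : rowIns r x with ⟨r', o⟩
      cases o with
      | none =>
          obtain ⟨he, hall⟩ := rowIns_none_spec hins
          subst he
          rw [insertT_cons_none rest hins]
          constructor
          · refine tab_cons_iff.2 ⟨⟨by simp, ?_⟩, hTrest, ?_⟩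
            · rw [List.pairwise_append]
              exact ⟨hrs, by simp, fun a ha b hb => by
                rcases List.mem_singleton.1 hb with rfl
                exact hall a ha⟩
            · intro hd hhd
              obtain ⟨hl1, hl2⟩ := hlink hd hhd
              constructor
              · simp; omega
              · intro i hi
                rw [List.getD_append _ _ _ _ (by omega)]
                exact hl2 i hi
          · exact Or.inr ⟨r, rest, r ++ [x], rest, rfl, rfl, Or.inl ⟨rfl, hall⟩⟩
      | some y =>
          have hbump := rowIns_some_spec hins
          obtain ⟨hs', hlen', hxy, j, hj, -, -, -, -, -⟩ := bump_facts hrs hbump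
          obtain ⟨hTout, hcases⟩ := ih hTrest y
          rw [insertT_cons_some rest hins]
          constructor
          · refine tab_cons_iff.2 ⟨⟨?_, hs'⟩, hTout, ?_⟩
            · intro hc
              rw [hc] at hlen'
              simp at hlen'
              exact hrne (List.length_eq_zero_iff.1 hlen'.symm)
            · intro hd hhd
              rcases hcases with ⟨hrest_nil, hout⟩ | ⟨h, rest₂, h', rest₂', hrest, hout, hHR⟩
              · rw [hout] at hhd
                simp at hhd
                rw [← hhd]
                exact interface_newrow hrs hbump
              · rw [hout] at hhd
                simp at hhd
                rw [← hhd]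
                exact interface hrs hbump (hlink h (by rw [hrest]; rfl)) hHR
          · refine Or.inr ⟨r, rest, r', insertT rest y, rfl, rfl, ?_⟩
            rcases hbump with ⟨A, B, ha, hb', hA, hxy'⟩ | ⟨hb', -⟩
            · exact Or.inr (Or.inl ⟨A, B, y, ha, hb', hA, hxy'⟩)
            · exact Or.inr (Or.inr hb')

lemma insertT_word : ∀ (T : List (List ℤ)), Tab T → ∀ x : ℤ,
    IsReducedWord (wordProd (rowword T ++ [x])) (rowword T ++ [x]) →
    CKEquiv (rowword T ++ [x]) (rowword (insertT T x)) := by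
  intro T
  induction T with
  | nil =>
      intro _ x _
      rw [insertT_nil]
      exact ckequiv_refl _
  | cons r rest ih =>
      intro hT x hred
      obtain ⟨⟨hrne, hrs⟩, hTrest, hlink⟩ := tab_cons_iff.1 hT
      rcases hins : rowIns r x with ⟨r', o⟩
      have hword := rowIns_word hrs x
      rw [hins] at hword
      simp only at hword
      cases o with
      | none =>
          obtain ⟨he, -⟩ := rowIns_none_spec hins
          subst he
          rw [insertT_cons_none rest hins, rowword_cons, rowword_cons]
          have : rowword rest ++ r ++ [x] = rowword rest ++ (r ++ [x]) := by
            simp [List.append_assoc]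
          rw [this]
          exact ckequiv_refl _
      | some y =>
          rcases hword with ⟨hnone, -⟩ | ⟨y', hy', hck⟩ | ⟨m, hm, hmlen⟩
          · simp at hnone
          · have hyy : y = y' := by simpa using hy'
            subst hyy
            rw [insertT_cons_some rest hins]
            have hck1 : CKEquiv (rowword (r :: rest) ++ [x]) (rowword rest ++ (y :: r')) := by
              rw [rowword_cons]
              have := ckequiv_append_left (rowword rest) hck
              rw [show rowword rest ++ r ++ [x] = rowword rest ++ (r ++ [x]) by
                simp [List.append_assoc]]
              exact this
            have hassoc : rowword rest ++ (y :: r') = (rowword rest ++ [y]) ++ r' := by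
              simp
            have hred2 : IsReducedWord (wordProd (rowword (r :: rest) ++ [x]))
                ((rowword rest ++ [y]) ++ r') := by
              have := reduced_of_ckequiv hred hck1
              rw [hassoc] at this
              exact this
            have hredpre : IsReducedWord (wordProd (rowword rest ++ [y])) (rowword rest ++ [y]) :=
              (reduced_append hred2).1
            have hck2 := ih hTrest y hredpre
            have hck3 := ckequiv_append_right r' hck2
            refine ckequiv_trans hck1 ?_
            rw [hassoc, rowword_cons]
            exact hck3
          · exfalso
            have hprod : wordProd (rowword rest ++ m) = wordProd (rowword (r :: rest) ++ [x]) := by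
              rw [wordProd_append, hm, rowword_cons, ← wordProd_append]
              congr 1
              simp [List.append_assoc]
            have h2 := hred.2 (rowword rest ++ m) hprod
            rw [rowword_cons] at h2
            simp only [List.length_append, List.length_singleton] at h2 hmlen
            omega

lemma exists_tab_word {l : List ℤ} (h : IsReducedWord (wordProd l) l) :
    ∃ T : List (List ℤ), Tab T ∧ CKEquiv l (rowword T) := by
  induction l using List.reverseRecOn with
  | nil => exact ⟨[], tab_nil, ckequiv_refl _⟩
  | append_singleton l x ih =>
      have hl : IsReducedWord (wordProd l) l := (reduced_append h).1
      obtain ⟨T, hT, hck⟩ := ih hl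
      have hck2 : CKEquiv (l ++ [x]) (rowword T ++ [x]) := ckequiv_append_right [x] hck
      have hprod : wordProd (l ++ [x]) = wordProd (rowword T ++ [x]) := ckequiv_prod hck2
      have hred2 : IsReducedWord (wordProd (rowword T ++ [x])) (rowword T ++ [x]) := by
        rw [← hprod]
        exact reduced_of_ckequiv h hck2
      exact ⟨insertT T x, (insertT_spec T hT x).1,
        ckequiv_trans hck2 (insertT_word T hT x hred2)⟩

end DomCK
namespace DomCK

/-- The Young diagram of `lam` shifted by `t` down-and-right. -/
def shiftDiag (t : ℤ) (lam : List ℕ) : Set (ℤ × ℤ) :=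
  {p | t + 1 ≤ p.1 ∧ t + 1 ≤ p.2 ∧ p.2 ≤ t + (lam.getD (p.1 - t - 1).toNat 0 : ℤ)}

lemma shiftDiag_zero (lam : List ℕ) : shiftDiag 0 lam = YDiagL lam := by
  ext ⟨a, b⟩
  simp only [shiftDiag, YDiagL, Set.mem_setOf_eq]
  constructor
  · rintro ⟨h1, h2, h3⟩
    refine ⟨by omega, by omega, ?_⟩
    rw [show a - 1 = a - 0 - 1 by ring]
    omega
  · rintro ⟨h1, h2, h3⟩
    refine ⟨by omega, by omega, ?_⟩
    rw [show a - 0 - 1 = a - 1 by ring]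
    omega

lemma rothe_mem_iff (w : Equiv.Perm ℤ) (p : ℤ × ℤ) :
    p ∈ RotheD w ↔ p.2 < w p.1 ∧ p.1 < w⁻¹ p.2 := by
  constructor
  · rintro ⟨j, h1, h2, h3⟩
    refine ⟨by rw [h3]; exact h2, ?_⟩
    rw [h3, Equiv.Perm.inv_apply_self]
    exact h1
  · rintro ⟨h1, h2⟩
    exact ⟨w⁻¹ p.2, h2, by rw [Equiv.Perm.apply_inv_self]; exact h1, (Equiv.Perm.apply_inv_self w p.2).symm⟩

/-- Row `[t+1, …, t+k]`. -/
def rowL (t : ℤ) (k : ℕ) : List ℤ := (List.range k).map fun j : ℕ => t + 1 + (j : ℤ)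

lemma rowL_succ (t : ℤ) (k : ℕ) : rowL t (k + 1) = rowL t k ++ [t + 1 + (k : ℤ)] := by
  simp [rowL, List.range_succ]

lemma rowL_mem {t : ℤ} {k : ℕ} {e : ℤ} : e ∈ rowL t k ↔ t + 1 ≤ e ∧ e ≤ t + k := by
  constructor
  · intro h
    obtain ⟨j, hj, he⟩ := List.mem_map.1 h
    have hj' := List.mem_range.1 hj
    omega
  · rintro ⟨h1, h2⟩
    exact List.mem_map.2 ⟨(e - t - 1).toNat, List.mem_range.2 (by omega), by omega⟩

lemma rowL_sorted (t : ℤ) (k : ℕ) : (rowL t k).Pairwise (· < ·) := by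
  induction k with
  | zero => simp [rowL]
  | succ n ih =>
      rw [rowL_succ, List.pairwise_append]
      refine ⟨ih, by simp, ?_⟩
      intro a ha b hb
      rcases List.mem_singleton.1 hb with rfl
      have := rowL_mem.1 ha
      omega

lemma wordProd_rowL_apply (t : ℤ) (k : ℕ) (z : ℤ) :
    wordProd (rowL t k) z =
      if z = t + k + 1 ∧ 1 ≤ k then t + 1
      else if t + 1 ≤ z ∧ z ≤ t + k then z + 1 else z := by
  induction k generalizing z with
  | zero =>
      simp only [rowL, List.range_zero, List.map_nil, wordProd_nil, Equiv.Perm.one_apply,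
        Nat.cast_zero]
      split_ifs <;> omega
  | succ n ih =>
      rw [rowL_succ, wordProd_append, Equiv.Perm.mul_apply]
      simp only [wordProd_cons, wordProd_nil, mul_one]
      rw [sT_apply]
      split_ifs <;> (rw [ih]; split_ifs <;> omega)

lemma wordProd_rev_rowL_apply (t : ℤ) (k : ℕ) (z : ℤ) :
    wordProd (rowL t k).reverse z =
      if z = t + 1 ∧ 1 ≤ k then t + k + 1
      else if t + 2 ≤ z ∧ z ≤ t + k + 1 then z - 1 else z := by
  have hinv : wordProd (rowL t k).reverse = (wordProd (rowL t k))⁻¹ := wordProd_reverse _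
  rw [hinv]
  have key := wordProd_rowL_apply t k
  rcases lt_trichotomy z (t + 1) with h | h | h
  · have : wordProd (rowL t k) z = z := by rw [key]; split_ifs <;> omega
    rw [show z = wordProd (rowL t k) z from this.symm, Equiv.Perm.inv_apply_self]
    rw [this]
    split_ifs <;> omega
  · subst h
    by_cases hk : 1 ≤ k
    · have : wordProd (rowL t k) (t + k + 1) = t + 1 := by rw [key]; split_ifs <;> omega
      rw [show (t+1 : ℤ) = wordProd (rowL t k) (t + k + 1) from this.symm,
        Equiv.Perm.inv_apply_self]
      rw [this]
      split_ifs <;> omega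
    · have hk0 : k = 0 := by omega
      subst hk0
      have : wordProd (rowL t 0) (t + 1) = t + 1 := by rw [key]; split_ifs <;> omega
      rw [show (t+1:ℤ) = wordProd (rowL t 0) (t+1) from this.symm, Equiv.Perm.inv_apply_self,
        this]
      split_ifs <;> omega
  · by_cases h2 : z ≤ t + k + 1
    · have : wordProd (rowL t k) (z - 1) = z := by rw [key]; split_ifs <;> omega
      rw [show z = wordProd (rowL t k) (z-1) from this.symm, Equiv.Perm.inv_apply_self, this]
      split_ifs <;> omega
    · have : wordProd (rowL t k) z = z := by rw [key]; split_ifs <;> omega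
      rw [show z = wordProd (rowL t k) z from this.symm, Equiv.Perm.inv_apply_self, this]
      split_ifs <;> omega

/-- Length of the initial consecutive run starting at `v`. -/
def runlen : List ℤ → ℤ → ℕ
  | [], _ => 0
  | a :: s, v => if a = v then runlen s (v + 1) + 1 else 0

lemma eval_rev_prod : ∀ (r : List ℤ), r.Pairwise (· < ·) → ∀ v : ℤ, (∀ e ∈ r, v ≤ e) →
    wordProd r.reverse v = v + (runlen r v : ℤ) := by
  intro r
  induction r with
  | nil => intro _ v _; simp [wordProd_nil, runlen]
  | cons a s ih =>
      intro hs v hv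
      have hsa : ∀ e ∈ s, a < e := (List.pairwise_cons.1 hs).1
      rw [List.reverse_cons, wordProd_append, Equiv.Perm.mul_apply]
      simp only [wordProd_cons, wordProd_nil, mul_one]
      by_cases hav : a = v
      · subst hav
        rw [sT_apply, if_pos rfl]
        rw [ih (List.pairwise_cons.1 hs).2 (a + 1) (fun e he => hsa e he)]
        simp only [runlen, if_pos rfl]
        push_cast
        ring
      · have hva : v < a := lt_of_le_of_ne (hv a (by simp)) (Ne.symm hav)
        rw [sT_fix (by omega) (by omega)]
        have : wordProd s.reverse v = v := by
          have hlow : ∀ i ∈ s.reverse, (v + 1) + 1 ≤ i := by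
            intro i hi
            have := hsa i (List.mem_reverse.1 hi)
            omega
          exact wordProd_fix_low hlow v (by omega)
        rw [this]
        simp [runlen, hav]

lemma run_exact : ∀ (r : List ℤ), r.Pairwise (· < ·) → ∀ v : ℤ, (∀ e ∈ r, v ≤ e) →
    (∀ e ∈ r, e ≤ v + (runlen r v : ℤ) - 1) →
    r = (List.range (runlen r v)).map fun j : ℕ => v + (j : ℤ) := by
  intro r
  induction r with
  | nil => intro _ v _ _; simp [runlen]
  | cons a s ih =>
      intro hs v hv hub
      by_cases hav : a = v
      · subst hav
        have hrun : runlen (a :: s) a = runlen s (a + 1) + 1 := by simp [runlen]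
        have hs2 := (List.pairwise_cons.1 hs).2
        have hsa : ∀ e ∈ s, a < e := (List.pairwise_cons.1 hs).1
        have hrec := ih hs2 (a + 1) (fun e he => hsa e he)
          (fun e he => by
            have := hub e (by simp [he])
            rw [hrun] at this
            push_cast at this ⊢
            omega)
        rw [hrun, hrec]
        rw [List.range_succ_eq_map]
        simp only [List.map_cons, List.map_map]
        congr 1
        · push_cast
          ring
        · conv_lhs => rw [hrec]
          apply List.map_congr_left
          intro j hj
          simp only [Function.comp_apply]
          push_cast
          ring
      · exfalso
        have h1 := hub a (by simp)
        have h2 := hv a (by simp)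
        simp only [runlen, if_neg hav] at h1
        omega

end DomCK
namespace DomCK

lemma fix_inv {w : Equiv.Perm ℤ} {t : ℤ} (hfix : ∀ x ≤ t, w x = x) : ∀ x ≤ t, w⁻¹ x = x :=
  fun x hx => by
    apply w.injective
    rw [Equiv.Perm.apply_inv_self, hfix x hx]

lemma high_inv {w : Equiv.Perm ℤ} {t : ℤ} (hfix : ∀ x ≤ t, w x = x) :
    ∀ γ, t + 1 ≤ γ → t + 1 ≤ w⁻¹ γ := by
  intro γ h
  by_contra hc
  push_neg at hc
  have := hfix (w⁻¹ γ) (by omega)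
  rw [Equiv.Perm.apply_inv_self] at this
  omega

lemma high_apply {w : Equiv.Perm ℤ} {t : ℤ} (hfix : ∀ x ≤ t, w x = x) :
    ∀ γ, t + 1 ≤ γ → t + 1 ≤ w γ := by
  intro γ h
  by_contra hc
  push_neg at hc
  have := fix_inv hfix (w γ) (by omega)
  rw [Equiv.Perm.inv_apply_self] at this
  omega

lemma sorted_getD_le_head {lam : List ℕ} (hs : lam.Pairwise (· ≥ ·)) :
    ∀ a : ℕ, lam.getD a 0 ≤ lam.getD 0 0 := by
  intro a
  cases lam with
  | nil => simp
  | cons l₁ mu =>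
      cases a with
      | zero => simp
      | succ n =>
          simp only [List.getD_cons_succ, List.getD_cons_zero]
          by_cases hn : n < mu.length
          · rw [List.getD_eq_getElem _ _ hn]
            exact (List.pairwise_cons.1 hs).1 _ (List.getElem_mem hn)
          · rw [List.getD_eq_default _ _ (by omega)]
            exact Nat.zero_le _

lemma getD_cons_toNat (l₁ : ℕ) (mu : List ℕ) (a : ℤ) (ha : 1 ≤ a) :
    (l₁ :: mu).getD a.toNat 0 = mu.getD (a - 1).toNat 0 := by
  have : a.toNat = (a - 1).toNat + 1 := by omega
  rw [this, List.getD_cons_succ]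

lemma rothe_mem_iff' (w : Equiv.Perm ℤ) (a b : ℤ) :
    (a, b) ∈ RotheD w ↔ b < w a ∧ a < w⁻¹ b := rothe_mem_iff w (a, b)

lemma F1 {w : Equiv.Perm ℤ} {t : ℤ} {lam : List ℕ} (hfix : ∀ x ≤ t, w x = x)
    (hD : RotheD w = shiftDiag t lam) (hlam : 1 ≤ lam.getD 0 0) :
    w (t + 1) = t + (lam.getD 0 0 : ℤ) + 1 := by
  set k : ℤ := (lam.getD 0 0 : ℤ) with hk
  have hmem : ∀ γ : ℤ, ((t + 1 : ℤ), γ) ∈ RotheD w ↔ (t + 1 ≤ γ ∧ γ ≤ t + k) := by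
    intro γ
    rw [hD]
    simp only [shiftDiag, Set.mem_setOf_eq]
    constructor
    · rintro ⟨h1, h2, h3⟩
      refine ⟨h2, ?_⟩
      rw [show ((t + 1 : ℤ) - t - 1) = 0 by ring, Int.toNat_zero] at h3
      exact h3
    · rintro ⟨h1, h2⟩
      refine ⟨by omega, h1, ?_⟩
      rw [show ((t + 1 : ℤ) - t - 1) = 0 by ring, Int.toNat_zero]
      exact h2
  have h1 : ((t + 1 : ℤ), t + k) ∈ RotheD w := (hmem _).2 ⟨by omega, le_refl _⟩
  rw [rothe_mem_iff'] at h1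
  by_contra hne
  have hge : t + k + 2 ≤ w (t + 1) := by
    rcases lt_or_ge (w (t+1)) (t + k + 2) with h | h
    · exfalso
      apply hne
      omega
    · exact h
  have h2 : ((t + 1 : ℤ), w (t + 1) - 1) ∈ RotheD w := by
    rw [rothe_mem_iff']
    refine ⟨by omega, ?_⟩
    have hinvge := high_inv hfix (w (t + 1) - 1) (by omega)
    have hneq : w⁻¹ (w (t + 1) - 1) ≠ t + 1 := by
      intro hc
      have h3 : w (w⁻¹ (w (t + 1) - 1)) = w (t + 1) - 1 := Equiv.Perm.apply_inv_self _ _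
      rw [hc] at h3
      omega
    omega
  have := (hmem _).1 h2
  omega

lemma descent_le {w : Equiv.Perm ℤ} {t : ℤ} {lam : List ℕ}
    (hD : RotheD w = shiftDiag t lam) (hs : lam.Pairwise (· ≥ ·)) {x : ℤ}
    (hdesc : w⁻¹ (x + 1) < w⁻¹ x) : x ≤ t + (lam.getD 0 0 : ℤ) := by
  have hmem : ((w⁻¹ (x + 1) : ℤ), x) ∈ RotheD w := by
    rw [rothe_mem_iff']
    constructor
    · simp only [Equiv.Perm.apply_inv_self]
      omega
    · exact hdesc
  rw [hD] at hmem
  obtain ⟨h1, h2, h3⟩ := hmem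
  have hb := sorted_getD_le_head hs ((w⁻¹ (x + 1) - t - 1).toNat)
  simp only at h3
  omega

lemma rowpeel {w : Equiv.Perm ℤ} {t : ℤ} {l₁ : ℕ} {mu : List ℕ}
    (hsorted : (l₁ :: mu).Pairwise (· ≥ ·)) (hl₁ : 1 ≤ l₁)
    (hfix : ∀ x ≤ t, w x = x)
    (hD : RotheD w = shiftDiag t (l₁ :: mu)) :
    (∀ x ≤ t + 1, (wordProd (rowL t l₁) * w) x = x) ∧
    RotheD (wordProd (rowL t l₁) * w) = shiftDiag (t + 1) mu := by
  have hF1 : w (t + 1) = t + (l₁ : ℤ) + 1 := by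
    have := F1 hfix hD (by simp [hl₁])
    simpa using this
  have hWinv1 : w⁻¹ (t + (l₁ : ℤ) + 1) = t + 1 := by
    rw [← hF1, Equiv.Perm.inv_apply_self]
  have hfixi := fix_inv hfix
  have hcinv := wordProd_rowL_apply t l₁
  have hcrev := wordProd_rev_rowL_apply t l₁
  have happly : ∀ z, (wordProd (rowL t l₁) * w) z = wordProd (rowL t l₁) (w z) :=
    fun z => Equiv.Perm.mul_apply _ _ _
  have hinv_apply : ∀ γ, (wordProd (rowL t l₁) * w)⁻¹ γ = w⁻¹ (wordProd (rowL t l₁).reverse γ) := by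
    intro γ
    rw [mul_inv_rev, Equiv.Perm.mul_apply]
    congr 1
    rw [wordProd_reverse]
  have hFw : ∀ i γ : ℤ, (γ < w i ∧ i < w⁻¹ γ) ↔
      (t + 1 ≤ i ∧ t + 1 ≤ γ ∧ γ ≤ t + ((l₁ :: mu).getD (i - t - 1).toNat 0 : ℤ)) := by
    intro i γ
    have := Set.ext_iff.1 hD (i, γ)
    rw [rothe_mem_iff'] at this
    simpa [shiftDiag] using this
  have hm_le : ∀ a : ℕ, ((l₁ :: mu).getD a 0) ≤ l₁ := by
    intro a
    have := sorted_getD_le_head hsorted a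
    simpa using this
  -- fixing part
  have hfix' : ∀ x ≤ t + 1, (wordProd (rowL t l₁) * w) x = x := by
    intro x hx
    rw [happly]
    rcases lt_or_eq_of_le hx with h | h
    · rw [hfix x (by omega), hcinv]
      split_ifs <;> omega
    · subst h
      rw [hF1, hcinv]
      split_ifs <;> omega
  refine ⟨hfix', ?_⟩
  ext ⟨i, γ⟩
  rw [rothe_mem_iff']
  simp only [shiftDiag, Set.mem_setOf_eq]
  have hwine : i ≠ t + 1 → w i ≠ t + (l₁ : ℤ) + 1 := by
    intro hne hc
    apply hne
    have : w⁻¹ (w i) = w⁻¹ (t + (l₁:ℤ) + 1) := by rw [hc]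
    rw [Equiv.Perm.inv_apply_self, hWinv1] at this
    omega
  constructor
  · rintro ⟨hg1, hg2⟩
    rw [happly, hcinv] at hg1
    rw [hinv_apply, hcrev] at hg2
    -- case on γ
    rcases lt_trichotomy γ (t + 1) with hγ | hγ | hγ
    · exfalso
      rw [if_neg (by omega), if_neg (by omega)] at hg2
      have : w⁻¹ γ = γ := hfixi γ (by omega)
      rw [this] at hg2
      -- i < γ ≤ t : then w i = i
      have hwi : w i = i := hfix i (by omega)
      rw [hwi, if_neg (by omega), if_neg (by omega)] at hg1
      omega
    · exfalso
      rw [if_pos (by constructor <;> omega)] at hg2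
      rw [hWinv1] at hg2
      -- i < t + 1, so i ≤ t
      have hwi : w i = i := hfix i (by omega)
      rw [hwi, if_neg (by omega), if_neg (by omega)] at hg1
      omega
    · -- γ ≥ t + 2
      have hit2 : t + 2 ≤ i := by
        by_contra hc
        push_neg at hc
        rcases lt_or_eq_of_le (by omega : i ≤ t + 1) with h | h
        · have hwi : w i = i := hfix i (by omega)
          rw [hwi, if_neg (by omega), if_neg (by omega)] at hg1
          omega
        · subst h
          rw [hF1, if_pos (by constructor <;> omega)] at hg1
          omega
      have hwine' := hwine (by omega)
      have hwub : γ ≤ w i := by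
        by_contra hc
        push_neg at hc  -- w i < γ
        rw [if_neg (by omega)] at hg1
        split_ifs at hg1 <;> omega
      rcases le_or_gt γ (t + (l₁:ℤ) + 1) with hγub | hγub
      · -- c γ = γ - 1
        rw [if_neg (by omega), if_pos (by constructor <;> omega)] at hg2
        have hFw1 := (hFw i (γ - 1)).1 ⟨by omega, hg2⟩
        refine ⟨by omega, by omega, ?_⟩
        have := hFw1.2.2
        rw [getD_cons_toNat _ _ _ (by omega)] at this
        rw [show i - (t+1) - 1 = i - t - 1 - 1 by ring]
        omega
      · -- γ ≥ t + l₁ + 2 : contradiction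
        exfalso
        rw [if_neg (by omega), if_neg (by omega)] at hg2
        -- hg2 : i < w⁻¹ γ ; need γ < w i strictly
        have hwub' : γ < w i := by
          rcases lt_or_eq_of_le hwub with h | h
          · exact h
          · exfalso
            rw [h, Equiv.Perm.inv_apply_self] at hg2
            omega
        have hFw1 := (hFw i γ).1 ⟨hwub', hg2⟩
        have := hm_le ((i - t - 1).toNat)
        omega
  · rintro ⟨hi2, hγ2, hγub⟩
    have hmu := hm_le ((i - t - 1).toNat)
    have hidx : ((l₁ :: mu).getD (i - t - 1).toNat 0) = mu.getD (i - (t+1) - 1).toNat 0 := by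
      rw [getD_cons_toNat _ _ _ (by omega)]
      congr 2
      omega
    have hγk : γ ≤ t + (l₁ : ℤ) + 1 := by
      have h1 : mu.getD (i - (t+1) - 1).toNat 0 ≤ l₁ := by rw [← hidx]; exact hm_le _
      omega
    have hFw1 := (hFw i (γ - 1)).2 ⟨by omega, by omega, by rw [hidx]; omega⟩
    obtain ⟨hA, hB⟩ := hFw1
    constructor
    · rw [happly, hcinv]
      have hwine' := hwine (by omega)
      split_ifs with h1 h2
      · omega
      · omega
      · -- w i not in [t+1, t+l₁], w i ≠ t+l₁+1, w i ≥ γ ≥ t+2 hence w i ≥ t+l₁+2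
        push_neg at h2
        omega
    · rw [hinv_apply, hcrev]
      rw [if_neg (by omega), if_pos (by constructor <;> omega)]
      exact hB

end DomCK
namespace DomCK

def TlamShift : ℤ → List ℕ → List (List ℤ)
  | _, [] => []
  | t, k :: mu => rowL t k :: TlamShift (t + 1) mu

lemma revrow_nil : revrow [] = [] := rfl

lemma revrow_cons (r : List ℤ) (rest : List (List ℤ)) :
    revrow (r :: rest) = r.reverse ++ revrow rest := by
  simp [revrow, rowword]

lemma rowlt_trans {a b c : List ℤ} (h1 : RowLt a b) (h2 : RowLt b c) : RowLt a c := by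
  refine ⟨le_trans h2.1 h1.1, fun i hi => ?_⟩
  exact lt_trans (h1.2 i (lt_of_lt_of_le hi h2.1)) (h2.2 i hi)

lemma tab_below : ∀ (rest : List (List ℤ)) (r : List ℤ), Tab (r :: rest) →
    ∀ s ∈ rest, RowLt r s := by
  intro rest
  induction rest with
  | nil => intro r _ s hs; simp at hs
  | cons h rest₂ ihh =>
      intro r hT s hs
      obtain ⟨_, hTtail, hlink⟩ := tab_cons_iff.1 hT
      have hrh : RowLt r h := hlink h rfl
      rcases List.mem_cons.1 hs with rfl | hs'
      · exact hrh
      · exact rowlt_trans hrh (ihh h hTtail s hs')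

lemma mem_revrow {T : List (List ℤ)} {x : ℤ} (h : x ∈ revrow T) : ∃ s ∈ T, x ∈ s := by
  simp only [revrow, rowword, List.mem_reverse, List.mem_flatten] at h
  obtain ⟨l, hl, hx⟩ := h
  exact ⟨l, hl, hx⟩

lemma mem_getD {s : List ℤ} {e : ℤ} (h : e ∈ s) : ∃ i < s.length, s.getD i 0 = e := by
  obtain ⟨i, hi, he⟩ := List.mem_iff_getElem.1 h
  exact ⟨i, hi, by rw [List.getD_eq_getElem _ _ hi]; exact he⟩

lemma sorted_le_getLast {r : List ℤ} (hs : r.Pairwise (· < ·)) (hne : r ≠ []) :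
    ∀ e ∈ r, e ≤ r.getLast hne := by
  intro e he
  have hd : r.dropLast ++ [r.getLast hne] = r := List.dropLast_append_getLast hne
  rw [← hd] at he hs
  rw [List.pairwise_append] at hs
  rcases List.mem_append.1 he with h1 | h1
  · exact le_of_lt (hs.2.2 e h1 _ (by simp))
  · rcases List.mem_singleton.1 h1 with rfl
    exact le_refl _

lemma claimB : ∀ (lam : List ℕ), lam.Pairwise (· ≥ ·) → (∀ k ∈ lam, 0 < k) →
    ∀ (t : ℤ) (w : Equiv.Perm ℤ), (∃ l0, wordProd l0 = w) → (∀ x ≤ t, w x = x) →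
    RotheD w = shiftDiag t lam →
    ∀ T, Tab T → IsReducedWord w (revrow T) → T = TlamShift t lam := by
  intro lam
  induction lam with
  | nil =>
      rintro _ _ t w ⟨l0, hl0⟩ hfix hD T hT hred
      have hinv : InvSet w = ∅ := by
        ext ⟨a, b⟩
        simp only [InvSet, Set.mem_setOf_eq, Set.mem_empty_iff_false, iff_false]
        rintro ⟨hab, hba⟩
        have hm : (a, w b) ∈ RotheD w := (rothe_mem_iff' w a (w b)).2
          ⟨hba, by rw [Equiv.Perm.inv_apply_self]; exact hab⟩
        rw [hD] at hm
        obtain ⟨h1, h2, h3⟩ := hm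
        simp only [List.getD] at h3
        simp at h3
        omega
      have hlen0 : (revrow T).length = 0 := by
        have := (isReduced_iff hl0 _).1 hred
        rw [this.2, hinv, Set.ncard_empty]
      cases T with
      | nil => rfl
      | cons r rest =>
          exfalso
          have hne : r ≠ [] := ((tab_cons_iff.1 hT).1).1
          rw [revrow_cons] at hlen0
          simp only [List.length_append, List.length_reverse] at hlen0
          exact hne (List.length_eq_zero_iff.1 (by omega))
  | cons l₁ mu ih =>
      intro hs hpos t w hword hfix hD T hT hred
      obtain ⟨l0, hl0⟩ := hword
      have hl₁ : 0 < l₁ := hpos l₁ (by simp)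
      have hgetD0 : ((l₁ :: mu).getD 0 0 : ℤ) = (l₁ : ℤ) := by simp
      cases T with
      | nil =>
          exfalso
          have hw1 : w = 1 := by
            have h1 := hred.1
            rw [revrow_nil, wordProd_nil] at h1
            exact h1.symm
          have hmem : ((t + 1 : ℤ), (t + 1 : ℤ)) ∈ RotheD w := by
            rw [hD]
            refine ⟨by omega, by omega, ?_⟩
            rw [show ((t:ℤ) + 1 - t - 1) = 0 by ring, Int.toNat_zero]
            simp only [List.getD_cons_zero]
            omega
          rw [hw1, rothe_mem_iff'] at hmem
          simp only [Equiv.Perm.one_apply, inv_one] at hmem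
          omega
      | cons r₁ rest =>
          obtain ⟨⟨hr₁ne, hr₁s⟩, hTrest, hlink⟩ := tab_cons_iff.1 hT
          have hsupp : ∀ i ∈ revrow (r₁ :: rest), t + 1 ≤ i :=
            support_letters _ w t hfix hred
          have hr₁low : ∀ e ∈ r₁, t + 1 ≤ e := fun e he =>
            hsupp e (by rw [revrow_cons]; exact List.mem_append.2 (Or.inl (List.mem_reverse.2 he)))
          have hrest_low : ∀ i ∈ revrow rest, t + 2 ≤ i := by
            intro e he
            obtain ⟨s, hsmem, hes⟩ := mem_revrow he
            obtain ⟨i, hilen, hie⟩ := mem_getD hes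
            have hrl := tab_below rest r₁ hT s hsmem
            have hsl := hrl.1
            have h1 := hrl.2 i hilen
            have h2 : t + 1 ≤ r₁.getD i 0 := hr₁low _ (getD_mem (by omega))
            omega
          have hw_t1 : w (t + 1) = t + 1 + (runlen r₁ (t + 1) : ℤ) := by
            rw [← hred.1, revrow_cons, wordProd_append, Equiv.Perm.mul_apply]
            have hfixrest : wordProd (revrow rest) (t + 1) = t + 1 :=
              wordProd_fix_low (fun i hi => by have := hrest_low i hi; omega) _ (le_refl _)
            rw [hfixrest]
            exact eval_rev_prod r₁ hr₁s (t + 1) hr₁low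
          have hF1' : w (t + 1) = t + (l₁ : ℤ) + 1 := by
            have := F1 hfix hD (by simp only [List.getD_cons_zero]; omega)
            rw [hgetD0] at this
            exact this
          have hrun : runlen r₁ (t + 1) = l₁ := by omega
          have hlast : r₁.getLast hr₁ne ≤ t + (l₁ : ℤ) := by
            have hdecomp : revrow (r₁ :: rest) =
                r₁.getLast hr₁ne :: (r₁.dropLast.reverse ++ revrow rest) := by
              rw [revrow_cons]
              conv_lhs => rw [← List.dropLast_append_getLast hr₁ne]
              simp [List.reverse_append]
            have hredcopy := hred
            rw [hdecomp] at hredcopy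
            have hdesc := (reduced_cons_descent hredcopy).1
            have := descent_le hD hs hdesc
            rw [hgetD0] at this
            exact this
          have hub : ∀ e ∈ r₁, e ≤ t + 1 + (runlen r₁ (t + 1) : ℤ) - 1 := by
            intro e he
            have := sorted_le_getLast hr₁s hr₁ne e he
            omega
          have hr₁eq : r₁ = rowL t l₁ := by
            have h1 := run_exact r₁ hr₁s (t + 1) hr₁low hub
            rw [hrun] at h1
            rw [h1, rowL]
          obtain ⟨hfix', hD'⟩ := rowpeel hs hl₁ hfix hD
          have hsplit : wordProd (revrow rest) = wordProd (rowL t l₁) * w := by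
            have h1 : wordProd (revrow (r₁ :: rest)) = w := hred.1
            rw [revrow_cons, wordProd_append, hr₁eq] at h1
            rw [← h1, wordProd_reverse, ← mul_assoc, mul_inv_cancel, one_mul]
          have hred2 : IsReducedWord w (r₁.reverse ++ revrow rest) := by
            rw [← revrow_cons]
            exact hred
          have hredrest : IsReducedWord (wordProd (rowL t l₁) * w) (revrow rest) := by
            have := (reduced_append hred2).2
            rw [hsplit] at this
            exact this
          have hrest_eq := ih (List.pairwise_cons.1 hs).2 (fun k hk => hpos k (by simp [hk]))
            (t + 1) (wordProd (rowL t l₁) * w)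
            ⟨rowL t l₁ ++ l0, by rw [wordProd_append, hl0]⟩ hfix' hD' rest hTrest hredrest
          rw [hr₁eq, hrest_eq]
          rfl

end DomCK
namespace DomCK

lemma chain'_getD {T : List (List ℤ)} : T.IsChain RowLt ↔
    ∀ i, i + 1 < T.length → RowLt (T.getD i []) (T.getD (i + 1) []) := by
  rw [List.isChain_iff_getElem]
  constructor
  · intro h i hi
    have h2 := h i (by omega)
    rw [List.getD_eq_getElem _ _ (by omega : i < T.length),
      List.getD_eq_getElem _ _ (by omega : i + 1 < T.length)]
    simpa [List.get_eq_getElem] using h2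
  · intro h i hi
    have h2 := h i (by omega)
    rw [List.getD_eq_getElem _ _ (by omega : i < T.length),
      List.getD_eq_getElem _ _ (by omega : i + 1 < T.length)] at h2
    simpa [List.get_eq_getElem] using h2

lemma tab_iff_incr {T : List (List ℤ)} : Tab T ↔ IncrTab T := by
  constructor
  · rintro ⟨hchain, hrows⟩
    refine ⟨⟨fun r hr => (hrows r hr).1, ?_⟩, fun r hr => (hrows r hr).2, ?_⟩
    · intro i hi
      exact (chain'_getD.1 hchain i hi).1
    · intro i j hi hj
      exact (chain'_getD.1 hchain i hi).2 j hj
  · rintro ⟨⟨hne, hlen⟩, hsort, hcol⟩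
    exact ⟨chain'_getD.2 (fun i hi => ⟨hlen i hi, fun j hj => hcol i j hi hj⟩),
      fun r hr => ⟨hne r hr, hsort r hr⟩⟩

lemma tlam_eq_aux : ∀ (lam : List ℕ) (n : ℕ),
    lam.mapIdx (fun i k => (List.range k).map fun j => ((n + i + j + 1 : ℕ) : ℤ)) =
      TlamShift (n : ℤ) lam := by
  intro lam
  induction lam with
  | nil => intro n; rfl
  | cons k mu ihm =>
      intro n
      rw [List.mapIdx_cons]
      show _ :: _ = rowL (n : ℤ) k :: TlamShift ((n : ℤ) + 1) mu
      congr 1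
      · rw [rowL]
        apply List.map_congr_left
        intro j hj
        push_cast
        ring
      · rw [show ((n : ℤ) + 1) = ((n + 1 : ℕ) : ℤ) by push_cast; ring, ← ihm (n + 1)]
        congr 1
        funext i k'
        congr 1
        funext j
        congr 1
        ring

lemma tlam_eq (lam : List ℕ) : Tlam lam = TlamShift 0 lam := by
  have h := tlam_eq_aux lam 0
  rw [show ((0 : ℕ) : ℤ) = 0 by norm_num] at h
  rw [← h, Tlam]
  congr 1
  funext i k'
  congr 1
  funext j
  congr 1
  ring

end DomCK
/-- If `w_λ ∈ S_∞` is the dominant permutation of shape `λ`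
(i.e. `D(w_λ) = D_λ`), then `R(w_λ)` is a single Coxeter–Knuth equivalence class and the
tableau `T_λ` with entry `i + j - 1` in box `(i,j)` is the unique increasing tableau of
partition shape whose reverse row reading word is a reduced word for `w_λ`. -/
theorem dominant_single_CK_class (w : Equiv.Perm ℤ) (hw : w ∈ SinftySet)
    (lam : List ℕ) (hsorted : lam.Pairwise (· ≥ ·)) (hpos : ∀ k ∈ lam, 0 < k)
    (hD : RotheD w = YDiagL lam) :
    (∃ x, {l : List ℤ | IsReducedWord w l} = {y | CKEquiv x y}) ∧
    IncrTab (Tlam lam) ∧ IsReducedWord w (revrow (Tlam lam)) ∧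
    (∀ T : List (List ℤ), IncrTab T → IsReducedWord w (revrow T) → T = Tlam lam) := by
  classical
  open DomCK in
  obtain ⟨l0, hl0pos, hl0⟩ := hw
  have hfix0 : ∀ x ≤ (0 : ℤ), w x = x := by
    intro x hx
    rw [← hl0]
    exact wordProd_fix_low (fun i hi => by have := hl0pos i hi; omega) x hx
  have hD0 : RotheD w = shiftDiag 0 lam := by rw [hD, shiftDiag_zero]
  have hTlam : Tlam lam = TlamShift 0 lam := tlam_eq lam
  have key : ∀ l, IsReducedWord w l → CKEquiv l (revrow (Tlam lam)) ∧ Tab (Tlam lam) := by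
    intro l hlred
    have hprod : wordProd l = w := hlred.1
    have hrev : IsReducedWord (wordProd l.reverse) l.reverse := by
      have h1 := reduced_reverse hlred
      rw [wordProd_reverse, hprod]
      exact h1
    obtain ⟨S, hS, hckS⟩ := exists_tab_word hrev
    have hck2 : CKEquiv l (revrow S) := by
      have h2 := ckequiv_reverse hckS
      rw [List.reverse_reverse] at h2
      exact h2
    have hSred : IsReducedWord w (revrow S) := reduced_of_ckequiv hlred hck2
    have hSeq : S = TlamShift 0 lam :=
      claimB lam hsorted hpos 0 w ⟨l0, hl0⟩ hfix0 hD0 S hS hSred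
    rw [hSeq, ← hTlam] at hck2 hS
    exact ⟨hck2, hS⟩
  obtain ⟨lr, hlr⟩ := exists_reduced hl0
  obtain ⟨hcklr, hTab⟩ := key lr hlr
  have hmain : IsReducedWord w (revrow (Tlam lam)) := reduced_of_ckequiv hlr hcklr
  refine ⟨⟨revrow (Tlam lam), ?_⟩, tab_iff_incr.1 hTab, hmain, ?_⟩
  · ext y
    simp only [Set.mem_setOf_eq]
    constructor
    · intro hy
      exact ckequiv_symm (key y hy).1
    · intro hy
      exact reduced_of_ckequiv hmain hy
  · intro T hTincr hTred
    have hTab' : Tab T := tab_iff_incr.2 hTincr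
    have h3 := claimB lam hsorted hpos 0 w ⟨l0, hl0⟩ hfix0 hD0 T hTab' hTred
    rw [h3]
    exact hTlam.symm
end

section
/- Let w be an element of S_infty and let n be a positive integer. If a = (a^1,...,a^n) in RF_n(w) satisfies e_i(a) = 0 for all i in {1,...,n-1}, then a is bounded by the standard flag, i.e., every letter m appearing in the factor a^i satisfies m >= i; equivalently, a belongs to BRF_n(w). -/
open MvPolynomial

/-- `RF_n(w)` for `w ∈ S_∞`: factorizations into strictly decreasing words of positive
integers. -/
def RFposZn (n : ℕ) (w : Equiv.Perm ℤ) : Set (ℕ → List ℤ) :=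
  {a | (∀ i, ZDec (a i)) ∧ (∀ i, ∀ x ∈ a i, 1 ≤ x) ∧ (∀ m, n ≤ m → a m = []) ∧
       IsReducedWord w (concatZ a n)}

theorem findPairZ_some_mem : ∀ (c : ℤ) (L : List ℤ) (b : ℤ) (r : List ℤ),
    findPairZ c L = (some b, r) → b ∈ L ∧ b < c := by
  intro c L
  induction L with
  | nil => intro b r h; simp [findPairZ] at h
  | cons x t ih =>
    intro b r h
    by_cases hx : x < c
    · simp only [findPairZ, if_pos hx, Prod.mk.injEq, Option.some.injEq] at h
      exact ⟨by simp [h.1], h.1 ▸ hx⟩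
    · simp only [findPairZ, if_neg hx] at h
      obtain ⟨h1, h2⟩ := Prod.mk.injEq .. ▸ h
      rcases hfp : findPairZ c t with ⟨o, r'⟩
      rw [hfp] at h1 h2
      simp at h1 h2
      obtain ⟨hm, hl⟩ := ih b r' (by rw [hfp, h1])
      exact ⟨List.mem_cons_of_mem _ hm, hl⟩

theorem findPairZ_snd_sub : ∀ (c : ℤ) (L : List ℤ), ∀ x ∈ (findPairZ c L).2, x ∈ L := by
  intro c L
  induction L with
  | nil => simp [findPairZ]
  | cons y t ih =>
    intro x hx
    by_cases hy : y < c
    · simp only [findPairZ, if_pos hy] at hx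
      exact List.mem_cons_of_mem _ hx
    · simp only [findPairZ, if_neg hy] at hx
      rcases List.mem_cons.mp hx with rfl | h
      · exact List.mem_cons_self
      · exact List.mem_cons_of_mem _ (ih x h)

theorem pairFoldZ_inv (u : List ℤ) : ∀ (vrev : List ℤ) (acc : List (ℤ × ℤ)) (rem : List ℤ),
    (∀ p ∈ acc, p.1 ∈ u ∧ p.1 < p.2) → (∀ x ∈ rem, x ∈ u) →
    ∀ p ∈ (vrev.foldl (fun st c =>
      match findPairZ c st.2 with
      | (none, r) => (st.1, r)
      | (some b, r) => ((b, c) :: st.1, r)) (acc, rem)).1, p.1 ∈ u ∧ p.1 < p.2 := by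
  intro vrev
  induction vrev with
  | nil => intro acc rem hacc _ p hp; exact hacc p hp
  | cons c t ih =>
    intro acc rem hacc hrem p hp
    rw [List.foldl_cons] at hp
    rcases hfp : findPairZ c rem with ⟨o, r⟩
    have hr : ∀ x ∈ r, x ∈ u := fun x hx =>
      hrem x (by have := findPairZ_snd_sub c rem x (by rw [hfp]; exact hx); exact this)
    cases o with
    | none =>
      rw [hfp] at hp
      exact ih acc r hacc hr p hp
    | some b =>
      rw [hfp] at hp
      refine ih ((b, c) :: acc) r ?_ hr p hp
      intro q hq
      rcases List.mem_cons.mp hq with rfl | h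
      · obtain ⟨hm, hl⟩ := findPairZ_some_mem c rem b r hfp
        exact ⟨hrem b hm, hl⟩
      · exact hacc q h

theorem pairsZ_mem_fst (u v : List ℤ) : ∀ p ∈ pairsZ u v, p.1 ∈ u ∧ p.1 < p.2 := by
  intro p hp
  exact pairFoldZ_inv u v.reverse [] u (by simp) (fun x hx => hx) p hp

/-- Every `gl_n`-highest weight element of `RF_n(w)` for `w ∈ S_∞` is
bounded by the standard flag: each letter `x` of the factor in (0-indexed) position `m`
satisfies `x ≥ m + 1` — i.e. belongs to `BRF_n(w)`. -/
theorem highest_weight_is_bounded (n : ℕ) (hn : 0 < n) (w : Equiv.Perm ℤ)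
    (hw : w ∈ SinftySet) (a : ℕ → List ℤ) (ha : a ∈ RFposZn n w)
    (he : ∀ i : ℕ, i + 1 < n → eZ i a = none) :
    ∀ m : ℕ, ∀ x ∈ a m, (m : ℤ) + 1 ≤ x := by
  obtain ⟨hdec, hpos, hemp, hred⟩ := ha
  intro m
  induction m with
  | zero =>
    intro x hx
    have := hpos 0 x hx
    simpa using this
  | succ k ih =>
    intro x hx
    by_cases hkn : n ≤ k + 1
    · rw [hemp (k + 1) hkn] at hx
      exact absurd hx List.not_mem_nil
    · have hk : k + 1 < n := lt_of_not_ge hkn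
      have he' := he k hk
      have hnone : eStepZ (a k) (a (k + 1)) = none := by
        unfold eZ applyAtZ at he'
        exact Option.map_eq_none_iff.mp he'
      have hfil : (a (k + 1)).filter
          (fun c => decide (c ∉ (pairsZ (a k) (a (k + 1))).map Prod.snd)) = [] := by
        rcases hh : (a (k + 1)).filter
            (fun c => decide (c ∉ (pairsZ (a k) (a (k + 1))).map Prod.snd)) with _ | ⟨c, t⟩
        · rfl
        · unfold eStepZ at hnone
          rw [hh] at hnone
          simp at hnone
      have hx2 : x ∈ (pairsZ (a k) (a (k + 1))).map Prod.snd := by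
        by_contra hc
        have : x ∈ (a (k + 1)).filter
            (fun c => decide (c ∉ (pairsZ (a k) (a (k + 1))).map Prod.snd)) :=
          List.mem_filter.mpr ⟨hx, by simpa using hc⟩
        rw [hfil] at this
        exact absurd this List.not_mem_nil
      obtain ⟨p, hp, hpx⟩ := List.mem_map.mp hx2
      obtain ⟨hb, hlt⟩ := pairsZ_mem_fst (a k) (a (k + 1)) p hp
      have hib := ih p.1 hb
      push_cast
      omega
end
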